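/- arXiv:math/0403112 — 9 statements merged into one kernel-verified Lean document; each statement's English description precedes it below -/
import Mathlib

section
/- Let B be the 2×2 block operator matrix [[A0, V],[V*, A1]] on H = H0 ⊕ H1, where A0, A1 are bounded self-adjoint operators on H0, H1 respectively, and V : H1 → H0 is bounded. A densely defined (possibly unbounded, not necessarily closed) operator X from H0 to H1 is a strong solution of the Riccati equation A1 X − X A0 − X V X + V* = 0 if and only if the graph subspace G(H0,X) is invariant under B. -/
open ContinuousLinearMap

/-- A densely defined operator `X : H0 → H1` is a strong solution of the
Riccati equation `A1 X - X A0 - X V X + V* = 0` if and only if its graph subspace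
`G(H0,X) = {(x, Xx)}` is invariant under the block operator `B = [[A0, V], [V*, A1]]`. -/
theorem riccati_strong_solution_iff_graph_invariant
    {H0 H1 : Type*} [NormedAddCommGroup H0] [InnerProductSpace ℂ H0] [CompleteSpace H0]
    [NormedAddCommGroup H1] [InnerProductSpace ℂ H1] [CompleteSpace H1]
    (A0 : H0 →L[ℂ] H0) (A1 : H1 →L[ℂ] H1) (V : H1 →L[ℂ] H0)
    (hA0 : IsSelfAdjoint A0) (hA1 : IsSelfAdjoint A1)
    (Dom : Submodule ℂ H0) (hDomDense : Dense (Dom : Set H0))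
    (X : Dom →ₗ[ℂ] H1) :
    -- `X` is a strong solution of the Riccati equation
    ((∀ x : Dom, A0 (x : H0) + V (X x) ∈ Dom) ∧
      (∀ x y : Dom, (y : H0) = A0 (x : H0) + V (X x) →
        A1 (X x) - X y + (adjoint V) (x : H0) = 0))
    ↔
    -- the graph subspace of `X` is invariant under `B`
    (∀ p ∈ {q : H0 × H1 | ∃ x : Dom, q = ((x : H0), X x)},
      (A0 p.1 + V p.2, (adjoint V) p.1 + A1 p.2)
        ∈ {q : H0 × H1 | ∃ x : Dom, q = ((x : H0), X x)}) := by
  constructor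
  · rintro ⟨h1, h2⟩ p ⟨x, rfl⟩
    refine ⟨⟨A0 (x : H0) + V (X x), h1 x⟩, ?_⟩
    have := h2 x ⟨A0 (x : H0) + V (X x), h1 x⟩ rfl
    simp only [Prod.mk.injEq]
    refine ⟨trivial, ?_⟩
    have hx : X ⟨A0 (x : H0) + V (X x), h1 x⟩ = A1 (X x) + (adjoint V) (x : H0) := by
      rwa [sub_add_eq_add_sub, sub_eq_zero, eq_comm] at this
    rw [hx]; abel
  · intro h
    have key : ∀ x : Dom, ∃ z : Dom, A0 (x : H0) + V (X x) = (z : H0) ∧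
        (adjoint V) (x : H0) + A1 (X x) = X z := by
      intro x
      obtain ⟨z, hz⟩ := h ((x : H0), X x) ⟨x, rfl⟩
      exact ⟨z, congrArg Prod.fst hz, congrArg Prod.snd hz⟩
    constructor
    · intro x
      obtain ⟨z, hz1, _⟩ := key x
      rw [hz1]; exact z.2
    · intro x y hy
      obtain ⟨z, hz1, hz2⟩ := key x
      have : y = z := Subtype.ext (hy.trans hz1)
      subst this
      rw [← hz2]; abel
end

section
/- Let H0 be a separable Hilbert space, A0 a bounded self-adjoint operator on H0, and v ∈ H0 a cyclic vector for A0. Let B be the operator on H = H0 ⊕ ℂ given by B(x ⊕ c) = (A0 x + c v) ⊕ (⟨v,x⟩ + a1 c) for a real number a1. Then the vector 0 ⊕ 1 is cyclic for B, hence B has simple spectrum. -/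
/-- If `v` is a cyclic vector for the bounded self-adjoint operator `A0` on a
separable Hilbert space `H0`, and `B` is the block operator `[[A0, v],[⟨v,·⟩, a1]]` on
`H0 ⊕ ℂ` (with `a1 ∈ ℝ`), then the vector `0 ⊕ 1` is cyclic for `B`. -/
theorem zero_oplus_one_cyclic_for_block_operator
    {H0 : Type*} [NormedAddCommGroup H0] [InnerProductSpace ℂ H0] [CompleteSpace H0]
    [TopologicalSpace.SeparableSpace H0]
    (A0 : H0 →L[ℂ] H0) (hA0 : IsSelfAdjoint A0) (v : H0) (a1 : ℝ)
    (hcyc : Dense ((Submodule.span ℂ (Set.range fun n : ℕ => (A0 ^ n) v) : Submodule ℂ H0) : Set H0))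
    (B : (H0 × ℂ) →L[ℂ] (H0 × ℂ))
    (hB : ∀ (x : H0) (c : ℂ), B (x, c) = (A0 x + c • v, (inner ℂ v x : ℂ) + (a1 : ℂ) * c)) :
    Dense ((Submodule.span ℂ
      (Set.range fun n : ℕ => (B ^ n) ((0 : H0), (1 : ℂ))) : Submodule ℂ (H0 × ℂ)) : Set (H0 × ℂ)) := by
  set S : Submodule ℂ (H0 × ℂ) :=
    Submodule.span ℂ (Set.range fun n : ℕ => (B ^ n) ((0 : H0), (1 : ℂ))) with hS
  have h01 : (((0 : H0), (1 : ℂ)) : H0 × ℂ) ∈ S :=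
    Submodule.subset_span ⟨0, by simp⟩
  -- S is B-invariant
  have hBS : ∀ x ∈ S, B x ∈ S := by
    intro x hx
    induction hx using Submodule.span_induction with
    | mem y hy =>
      obtain ⟨n, rfl⟩ := hy
      exact Submodule.subset_span ⟨n + 1, by
        simp [pow_succ', ContinuousLinearMap.mul_apply]⟩
    | zero => simp
    | add a b _ _ ha hb => simpa [map_add] using S.add_mem ha hb
    | smul c a _ h => simpa [map_smul] using S.smul_mem c h
  -- key: (A0^n v, 0) ∈ S
  have key : ∀ n : ℕ, (((A0 ^ n) v, (0 : ℂ)) : H0 × ℂ) ∈ S := by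
    intro n
    induction n with
    | zero =>
      have hva : ((v, (a1 : ℂ)) : H0 × ℂ) ∈ S := by
        have := hBS _ h01
        rw [hB] at this
        simpa using this
      have := S.sub_mem hva (S.smul_mem (a1 : ℂ) h01)
      simpa using this
    | succ n ih =>
      have hb := hBS _ ih
      rw [hB] at hb
      have := S.sub_mem hb (S.smul_mem ((inner ℂ v ((A0 ^ n) v) : ℂ)) h01)
      simpa [pow_succ', ContinuousLinearMap.mul_apply] using this
  -- pass to closure
  set M : Submodule ℂ (H0 × ℂ) := S.topologicalClosure with hM
  have hSM : S ≤ M := Submodule.le_topologicalClosure S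
  have hMclosed : IsClosed (M : Set (H0 × ℂ)) := Submodule.isClosed_topologicalClosure S
  -- all (y, 0) are in M
  have hleft : ∀ y : H0, ((y, (0 : ℂ)) : H0 × ℂ) ∈ M := by
    set C : Submodule ℂ H0 := M.comap ((ContinuousLinearMap.inl ℂ H0 ℂ : H0 →L[ℂ] H0 × ℂ) : H0 →ₗ[ℂ] H0 × ℂ) with hC
    have hCclosed : IsClosed (C : Set H0) :=
      hMclosed.preimage (ContinuousLinearMap.inl ℂ H0 ℂ).continuous
    have hspan : (Submodule.span ℂ (Set.range fun n : ℕ => (A0 ^ n) v)) ≤ C := by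
      rw [Submodule.span_le]
      rintro _ ⟨n, rfl⟩
      exact hSM (key n)
    have hdense : Dense (C : Set H0) := hcyc.mono hspan
    have : (C : Set H0) = Set.univ := hCclosed.closure_eq ▸ by
      simpa [hCclosed.closure_eq] using hdense.closure_eq
    intro y
    show y ∈ (C : Set H0)
    rw [this]; trivial
  -- conclude
  intro z
  have hzM : z ∈ M := by
    obtain ⟨x, c⟩ := z
    have h1 : ((x, (0 : ℂ)) : H0 × ℂ) ∈ M := hleft x
    have h2 : ((x, (0 : ℂ)) : H0 × ℂ) + c • (((0 : H0), (1 : ℂ)) : H0 × ℂ) ∈ M :=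
      M.add_mem h1 (M.smul_mem c (hSM h01))
    simpa using h2
  exact hzM
end

section
/- Let m be a compactly supported Borel probability measure on ℝ, v ∈ L²(ℝ,m), and a1 ∈ ℝ. Then the function φ(z) = [1 + (a1 − z)·∫ |v(μ)|²/(μ − z) dm(μ)] / [(a1 − z) − ∫ |v(μ)|²/(μ − z) dm(μ)], defined for Im z > 0, is a Herglotz function: it is analytic on the upper half-plane and maps the upper half-plane into itself. -/
open MeasureTheory Complex

/-- For a compactly supported Borel probability measure `m` on `ℝ`,
`v ∈ L²(ℝ,m)` and `a1 ∈ ℝ`, the function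
`φ(z) = (1 + (a1 - z)·∫ |v|²/(μ - z) dm) / ((a1 - z) - ∫ |v|²/(μ - z) dm)`
is a Herglotz function: it is analytic on the open upper half-plane and maps it into itself. -/
theorem herglotz_function_of_block_operator
    (m : Measure ℝ) [IsProbabilityMeasure m]
    (K : Set ℝ) (hK : IsCompact K) (hmK : m Kᶜ = 0)
    (v : ℝ → ℂ) (hv : MemLp v 2 m) (a1 : ℝ)
    (g φ : ℂ → ℂ)
    (hg : ∀ z : ℂ, g z = ∫ μ, (‖v μ‖ ^ 2 : ℂ) / ((μ : ℂ) - z) ∂m)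
    (hφ : ∀ z : ℂ, φ z = (1 + ((a1 : ℂ) - z) * g z) / (((a1 : ℂ) - z) - g z)) :
    DifferentiableOn ℂ φ {z : ℂ | 0 < z.im} ∧ ∀ z : ℂ, 0 < z.im → 0 < (φ z).im := by
  -- integrability of ‖v‖²
  have hv2 : Integrable (fun μ => ‖v μ‖ ^ 2) m := by
    have h := hv.integrable_norm_rpow (by norm_num) (by norm_num)
    simpa [ENNReal.toReal_ofNat, Real.rpow_natCast] using h
  have hvm : AEStronglyMeasurable (fun μ => ((‖v μ‖ : ℂ) ^ 2)) m := by
    have h1 : AEStronglyMeasurable (fun μ => (‖v μ‖ : ℂ)) m :=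
      Complex.continuous_ofReal.comp_aestronglyMeasurable hv.aestronglyMeasurable.norm
    simpa [pow_two] using (show AEStronglyMeasurable (fun μ => (‖v μ‖ : ℂ) * (‖v μ‖ : ℂ)) m from h1.mul h1)
  -- pointwise lower bound on |μ - z|
  have habs : ∀ (z : ℂ) (μ : ℝ), z.im ≤ ‖((μ : ℂ) - z)‖ := by
    intro z μ
    have h := Complex.abs_im_le_norm ((μ : ℂ) - z)
    have : ((μ : ℂ) - z).im = -z.im := by simp
    rw [this] at h
    calc z.im ≤ |(-z.im)| := by rw [abs_neg]; exact le_abs_self _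
    _ ≤ _ := h
  have hne : ∀ (z : ℂ), 0 < z.im → ∀ μ : ℝ, ((μ : ℂ) - z) ≠ 0 := by
    intro z hz μ h0
    have := habs z μ
    rw [h0] at this; simp at this; linarith
  -- measurability of the integrand
  have hmeas : ∀ z : ℂ, AEStronglyMeasurable (fun μ : ℝ => (‖v μ‖ ^ 2 : ℂ) / ((μ : ℂ) - z)) m := by
    intro z
    have h2 : AEStronglyMeasurable (fun μ : ℝ => ((μ : ℂ) - z)⁻¹) m :=
      ((Complex.continuous_ofReal.sub continuous_const).measurable.inv).aestronglyMeasurable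
    simpa [div_eq_mul_inv] using (show AEStronglyMeasurable (fun μ : ℝ => (‖v μ‖ : ℂ) ^ 2 * ((μ : ℂ) - z)⁻¹) m from hvm.mul h2)
  -- integrability of the integrand
  have hint : ∀ z : ℂ, 0 < z.im → Integrable (fun μ : ℝ => (‖v μ‖ ^ 2 : ℂ) / ((μ : ℂ) - z)) m := by
    intro z hz
    refine Integrable.mono' (hv2.div_const z.im) (hmeas z) (ae_of_all _ fun μ => ?_)
    rw [norm_div]
    have h1 : ‖((‖v μ‖ : ℂ) ^ 2)‖ = ‖v μ‖ ^ 2 := by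
      rw [norm_pow, Complex.norm_real, norm_norm]
    rw [h1]
    have h2 : z.im ≤ ‖(μ : ℂ) - z‖ := by simpa using habs z μ
    exact div_le_div_of_nonneg_left (by positivity) hz h2
  -- nonnegativity of Im g
  have hgim : ∀ z : ℂ, 0 < z.im → 0 ≤ (g z).im := by
    intro z hz
    have him : (∫ μ, (‖v μ‖ ^ 2 : ℂ) / ((μ : ℂ) - z) ∂m).im
        = ∫ μ, ((‖v μ‖ ^ 2 : ℂ) / ((μ : ℂ) - z)).im ∂m := (integral_im (hint z hz)).symm
    rw [hg z, him]
    refine integral_nonneg fun μ => ?_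
    have : (((‖v μ‖ : ℂ) ^ 2) / ((μ : ℂ) - z)).im
        = ‖v μ‖ ^ 2 * z.im / normSq ((μ : ℂ) - z) := by
      rw [Complex.div_im]
      simp [Complex.normSq_apply, ← Complex.ofReal_pow, Complex.ofReal_im, Complex.ofReal_re]
      ring
    rw [this]
    have := normSq_nonneg ((μ : ℂ) - z)
    positivity
  -- denominator nonzero
  have hden : ∀ z : ℂ, 0 < z.im → (((a1 : ℂ) - z) - g z) ≠ 0 := by
    intro z hz h0
    have h1 : (((a1 : ℂ) - z) - g z).im = -z.im - (g z).im := by simp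
    rw [h0] at h1
    simp at h1
    have := hgim z hz
    linarith
  -- differentiability of g
  have hgdiff : ∀ z0 : ℂ, 0 < z0.im → DifferentiableAt ℂ g z0 := by
    intro z0 hz0
    have hε : (0 : ℝ) < z0.im / 2 := by linarith
    have hball : ∀ z ∈ Metric.ball z0 (z0.im / 2), z0.im / 2 < z.im := by
      intro z hzb
      rw [Metric.mem_ball, Complex.dist_eq] at hzb
      have h1 := Complex.abs_im_le_norm (z - z0)
      rw [Complex.sub_im] at h1
      have := abs_sub_abs_le_abs_sub z.im z0.im
      have h2 : |z.im - z0.im| < z0.im / 2 := lt_of_le_of_lt h1 hzb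
      have := abs_lt.mp h2
      linarith [this.1]
    have key := hasDerivAt_integral_of_dominated_loc_of_deriv_le (μ := m)
      (F := fun z (μ : ℝ) => (‖v μ‖ ^ 2 : ℂ) / ((μ : ℂ) - z))
      (F' := fun z (μ : ℝ) => (‖v μ‖ ^ 2 : ℂ) / ((μ : ℂ) - z) ^ 2)
      (x₀ := z0) (bound := fun μ => ‖v μ‖ ^ 2 * (2 / z0.im) ^ 2) (Metric.ball_mem_nhds z0 hε)
      (Filter.Eventually.of_forall fun z => hmeas z)
      (hint z0 hz0)
      (by
        have h2 : AEStronglyMeasurable (fun μ : ℝ => (((μ : ℂ) - z0) ^ 2)⁻¹) m :=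
          (((Complex.continuous_ofReal.sub continuous_const).pow 2).measurable.inv).aestronglyMeasurable
        simpa [div_eq_mul_inv] using (show AEStronglyMeasurable (fun μ : ℝ => (‖v μ‖ : ℂ) ^ 2 * (((μ : ℂ) - z0) ^ 2)⁻¹) m from hvm.mul h2))
      (ae_of_all _ ?_) (hv2.mul_const _) (ae_of_all _ ?_)
    · have hgeq : g = fun z => ∫ μ, (‖v μ‖ ^ 2 : ℂ) / ((μ : ℂ) - z) ∂m := funext hg
      rw [hgeq]
      exact key.2.differentiableAt
    · -- bound
      intro μ z hzb
      have h1 := hball z hzb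
      have h2 : z0.im / 2 ≤ ‖(μ : ℂ) - z‖ := le_trans (le_of_lt h1) (habs z μ)
      rw [norm_div]
      have h3 : ‖((‖v μ‖ : ℂ) ^ 2)‖ = ‖v μ‖ ^ 2 := by
        rw [norm_pow, Complex.norm_real, norm_norm]
      rw [h3]
      have h4 : ‖((μ : ℂ) - z) ^ 2‖ = ‖(μ : ℂ) - z‖ ^ 2 := by
        simp [norm_pow]
      rw [h4]
      have h5 : (z0.im / 2) ^ 2 ≤ ‖(μ : ℂ) - z‖ ^ 2 := by
        apply pow_le_pow_left₀ (by positivity) h2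
      have h6 : (0 : ℝ) < (z0.im / 2) ^ 2 := by positivity
      calc ‖v μ‖ ^ 2 / ‖(μ : ℂ) - z‖ ^ 2
          ≤ ‖v μ‖ ^ 2 / (z0.im / 2) ^ 2 :=
            div_le_div_of_nonneg_left (by positivity) h6 h5
        _ = ‖v μ‖ ^ 2 * (2 / z0.im) ^ 2 := by
            rw [div_pow]
            field_simp
    · -- derivative pointwise
      intro μ z hzb
      have h1 := hball z hzb
      have hne' : ((μ : ℂ) - z) ≠ 0 := hne z (by linarith) μ
      have hd1 : HasDerivAt (fun z : ℂ => (μ : ℂ) - z) (-1) z := by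
        simpa using (hasDerivAt_id z).const_sub ((μ : ℂ))
      have hd2 := hd1.inv hne'
      have hd3 := hd2.const_mul ((‖v μ‖ : ℂ) ^ 2)
      have : ((‖v μ‖ : ℂ) ^ 2) * (-(-1) / ((μ : ℂ) - z) ^ 2)
          = (‖v μ‖ ^ 2 : ℂ) / ((μ : ℂ) - z) ^ 2 := by ring
      rw [this] at hd3
      simpa [div_eq_mul_inv] using hd3
  constructor
  · -- analyticity
    intro z hz
    have hz' : 0 < z.im := hz
    have hφeq : φ = fun w => (1 + ((a1 : ℂ) - w) * g w) / (((a1 : ℂ) - w) - g w) := funext hφ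
    rw [hφeq]
    apply DifferentiableAt.differentiableWithinAt
    have hgd := hgdiff z hz'
    have hd1 : DifferentiableAt ℂ (fun w : ℂ => (a1 : ℂ) - w) z :=
      (differentiableAt_const _).sub differentiableAt_id
    exact ((differentiableAt_const 1).add (hd1.mul hgd)).div (hd1.sub hgd) (hden z hz')
  · -- positivity of Im φ
    intro z hz
    rw [hφ z]
    set w : ℂ := (a1 : ℂ) - z with hw
    set G : ℂ := g z with hG
    have hb : w.im = -z.im := by simp [hw]
    have hd : 0 ≤ G.im := hgim z hz
    have hD : (w - G) ≠ 0 := hden z hz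
    have hnsq : 0 < normSq (w - G) := normSq_pos.mpr hD
    rw [Complex.div_im, div_sub_div_same]
    apply div_pos _ hnsq
    have hexp : (1 + w * G).im * (w - G).re - (1 + w * G).re * (w - G).im
        = -w.im * (1 + G.re ^ 2 + G.im ^ 2) + G.im * (1 + w.re ^ 2 + w.im ^ 2) := by
      simp [Complex.add_im, Complex.add_re, Complex.mul_im, Complex.mul_re,
        Complex.sub_re, Complex.sub_im, Complex.one_re, Complex.one_im]
      ring
    rw [hexp, hb]
    nlinarith [sq_nonneg G.re, sq_nonneg G.im, sq_nonneg w.re, sq_nonneg w.im,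
      mul_nonneg hd (sq_nonneg w.re), mul_nonneg hd (sq_nonneg w.im)]
end

section
/- Let B be a bounded self-adjoint operator on H = H0 ⊕ ℂ of the form B(x ⊕ c) = (A0 x + c v) ⊕ (⟨v,x⟩ + a1 c), with A0 bounded self-adjoint on H0, v ∈ H0, a1 ∈ ℝ. Define the measure ω(δ) = ⟨v⊕0, E_B(δ)(v⊕0)⟩ + ⟨0⊕1, E_B(δ)(0⊕1)⟩ for Borel sets δ, where E_B is the spectral measure of B. Then for any Borel set δ, ω(δ) = 0 implies E_B(δ) = 0, provided v is cyclic for A0. -/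
set_option synthInstance.maxHeartbeats 1000000 in
/-- Let `B = [[A0, v],[⟨v,·⟩, a1]]` on `H = H0 ⊕ ℂ`, with `v` cyclic for the
bounded self-adjoint operator `A0`, and let `E_B` be (a projection-valued measure with the
characteristic properties of) the spectral measure of `B`.  If for a Borel set `δ` the scalar
measure `ω(δ) = ⟨v⊕0, E_B(δ)(v⊕0)⟩ + ⟨0⊕1, E_B(δ)(0⊕1)⟩` vanishes, then `E_B(δ) = 0`. -/
theorem omega_zero_implies_spectral_projection_zero
    {H0 : Type*} [NormedAddCommGroup H0] [InnerProductSpace ℂ H0] [CompleteSpace H0]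
    (A0 : H0 →L[ℂ] H0) (hA0 : IsSelfAdjoint A0) (v : H0) (a1 : ℝ)
    (hcyc : Dense ((Submodule.span ℂ (Set.range fun n : ℕ => (A0 ^ n) v) : Submodule ℂ H0) : Set H0))
    (B : WithLp 2 (H0 × ℂ) →L[ℂ] WithLp 2 (H0 × ℂ))
    (hB : ∀ (x : H0) (c : ℂ),
      B ((WithLp.equiv 2 (H0 × ℂ)).symm (x, c)) =
        (WithLp.equiv 2 (H0 × ℂ)).symm (A0 x + c • v, (inner ℂ v x : ℂ) + (a1 : ℂ) * c))
    (E : Set ℝ → (WithLp 2 (H0 × ℂ) →L[ℂ] WithLp 2 (H0 × ℂ)))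
    (hEsa : ∀ s, IsSelfAdjoint (E s)) (hEidem : ∀ s, IsIdempotentElem (E s))
    (hEcomm : ∀ s, Commute (E s) B)
    (δ : Set ℝ) (hδ : MeasurableSet δ)
    (hω : (inner ℂ ((WithLp.equiv 2 (H0 × ℂ)).symm (v, (0 : ℂ)))
            (E δ ((WithLp.equiv 2 (H0 × ℂ)).symm (v, (0 : ℂ)))) : ℂ)
        + (inner ℂ ((WithLp.equiv 2 (H0 × ℂ)).symm ((0 : H0), (1 : ℂ)))
            (E δ ((WithLp.equiv 2 (H0 × ℂ)).symm ((0 : H0), (1 : ℂ)))) : ℂ) = 0) :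
    E δ = 0 := by
  classical
  set P := E δ with hPdef
  have hPsa : IsSelfAdjoint P := hEsa δ
  have hP2 : IsIdempotentElem P := hEidem δ
  -- ⟨x, Px⟩ = ‖Px‖²
  have key : ∀ x, (inner ℂ x (P x) : ℂ) = (‖P x‖^2 : ℝ) := by
    intro x
    have h : P x = P (P x) := by rw [← ContinuousLinearMap.mul_apply, hP2]
    conv_lhs => rw [h, ← ContinuousLinearMap.adjoint_inner_left, hPsa.adjoint_eq]
    rw [inner_self_eq_norm_sq_to_K]; norm_cast
  set e1 : WithLp 2 (H0 × ℂ) := (WithLp.equiv 2 (H0 × ℂ)).symm (v, (0 : ℂ)) with he1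
  set e2 : WithLp 2 (H0 × ℂ) := (WithLp.equiv 2 (H0 × ℂ)).symm ((0 : H0), (1 : ℂ)) with he2
  rw [key e1, key e2] at hω
  have hsum : (‖P e1‖^2 + ‖P e2‖^2 : ℝ) = 0 := by exact_mod_cast hω
  have h1 : P e1 = 0 := by
    have := (add_eq_zero_iff_of_nonneg (by positivity) (by positivity)).mp hsum
    have := pow_eq_zero_iff (n := 2) (by norm_num) |>.mp this.1
    simpa using this
  have h2 : P e2 = 0 := by
    have := (add_eq_zero_iff_of_nonneg (by positivity) (by positivity)).mp hsum
    have := pow_eq_zero_iff (n := 2) (by norm_num) |>.mp this.2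
    simpa using this
  have hcomm : ∀ z, P (B z) = B (P z) := by
    intro z
    have h := hEcomm δ
    calc P (B z) = (P * B) z := rfl
      _ = (B * P) z := by rw [h]
      _ = B (P z) := rfl
  -- the continuous linear map y ↦ equiv.symm (y, 0)
  let L : H0 →L[ℂ] WithLp 2 (H0 × ℂ) :=
    (WithLp.prodContinuousLinearEquiv 2 ℂ H0 ℂ).symm.toContinuousLinearMap.comp
      (ContinuousLinearMap.inl ℂ H0 ℂ)
  have hL : ∀ y : H0, L y = (WithLp.equiv 2 (H0 × ℂ)).symm (y, 0) := fun y => rfl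
  have hker : ∀ n : ℕ, P (L ((A0 ^ n) v)) = 0 := by
    intro n
    induction n with
    | zero => simpa [hL, he1] using h1
    | succ n ih =>
      have hBy : B (L ((A0 ^ n) v)) = L (A0 ((A0 ^ n) v)) + (inner ℂ v ((A0 ^ n) v) : ℂ) • e2 := by
        rw [hL, hB, hL, he2]
        simp only [WithLp.equiv_symm_apply, ← WithLp.toLp_smul, ← WithLp.toLp_add]
        simp [Prod.smul_mk, Prod.mk_add_mk]
      have : L ((A0 ^ (n+1)) v) = B (L ((A0 ^ n) v)) - (inner ℂ v ((A0 ^ n) v) : ℂ) • e2 := by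
        rw [hBy]; rw [pow_succ']; simp
      rw [this, map_sub, hcomm, ih, map_zero, map_smul, h2, smul_zero, sub_zero]
  have hkerspan : ∀ y ∈ Submodule.span ℂ (Set.range fun n : ℕ => (A0 ^ n) v), P (L y) = 0 := by
    intro y hy
    have : Submodule.span ℂ (Set.range fun n : ℕ => (A0 ^ n) v) ≤
        LinearMap.ker ((P.comp L) : H0 →L[ℂ] WithLp 2 (H0 × ℂ)).toLinearMap := by
      rw [Submodule.span_le]
      rintro _ ⟨n, rfl⟩
      simpa using hker n
    exact this hy
  -- density
  have hdense : Dense ((LinearMap.ker (P : WithLp 2 (H0 × ℂ) →ₗ[ℂ] WithLp 2 (H0 × ℂ)) : Submodule ℂ (WithLp 2 (H0 × ℂ))) : Set (WithLp 2 (H0 × ℂ))) := by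
    intro z
    set x : H0 := ((WithLp.equiv 2 (H0 × ℂ)) z).1 with hx
    set c : ℂ := ((WithLp.equiv 2 (H0 × ℂ)) z).2 with hc
    have hz : z = L x + c • e2 := by
      rw [hL, he2]; simp only [WithLp.equiv_symm_apply, ← WithLp.toLp_smul, ← WithLp.toLp_add]
      simp [Prod.smul_mk, Prod.mk_add_mk, hx, hc]
      rfl
    let f : H0 → WithLp 2 (H0 × ℂ) := fun y => L y + c • e2
    have hf : Continuous f := (L.continuous).add continuous_const
    have hmem : ∀ y ∈ Submodule.span ℂ (Set.range fun n : ℕ => (A0 ^ n) v),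
        f y ∈ (LinearMap.ker (P : WithLp 2 (H0 × ℂ) →ₗ[ℂ] WithLp 2 (H0 × ℂ)) : Submodule ℂ (WithLp 2 (H0 × ℂ))) := by
      intro y hy
      simp only [LinearMap.mem_ker, f, ContinuousLinearMap.coe_coe]
      rw [map_add, map_smul, hkerspan y hy, h2, smul_zero, add_zero]
    have hxcl : x ∈ closure ((Submodule.span ℂ (Set.range fun n : ℕ => (A0 ^ n) v) : Submodule ℂ H0) : Set H0) :=
      hcyc x
    have : f x ∈ closure ((LinearMap.ker (P : WithLp 2 (H0 × ℂ) →ₗ[ℂ] WithLp 2 (H0 × ℂ)) : Submodule ℂ (WithLp 2 (H0 × ℂ))) : Set (WithLp 2 (H0 × ℂ))) := by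
      have := hf.continuousAt (x := x)
      have himg : f x ∈ closure (f '' ((Submodule.span ℂ (Set.range fun n : ℕ => (A0 ^ n) v) : Submodule ℂ H0) : Set H0)) := by
        apply mem_closure_image hf.continuousAt hxcl
      refine closure_mono ?_ himg
      rintro _ ⟨y, hy, rfl⟩
      exact hmem y hy
    rw [hz]; exact this
  have hclosed : IsClosed ((LinearMap.ker (P : WithLp 2 (H0 × ℂ) →ₗ[ℂ] WithLp 2 (H0 × ℂ)) : Submodule ℂ (WithLp 2 (H0 × ℂ))) : Set (WithLp 2 (H0 × ℂ))) :=
    ContinuousLinearMap.isClosed_ker P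
  have htop : ∀ z, P z = 0 := by
    intro z
    have : z ∈ ((LinearMap.ker (P : WithLp 2 (H0 × ℂ) →ₗ[ℂ] WithLp 2 (H0 × ℂ)) : Submodule ℂ (WithLp 2 (H0 × ℂ))) : Set (WithLp 2 (H0 × ℂ))) := by
      rw [← hclosed.closure_eq]
      exact hdense z
    exact this
  ext z
  exact htop z
end

section
/- Let m be a finite Borel measure on ℝ, v ∈ L²(ℝ,m), λ ∈ ℝ. If the functional X_λ, with domain Dom(X_λ) = {φ ∈ L²(ℝ,m) : lim_{ε→0+} ∫ \overline{v(μ)} φ(μ)/(μ − λ − iε) dm(μ) exists}, and defined by that limit, is bounded on its domain, then ∫ |v(μ)|²/|μ − λ|² dm(μ) < ∞. -/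
open MeasureTheory Filter Topology Complex
open scoped ENNReal

/-- If the functional `X_λ`, defined on its natural domain by the boundary
value `lim_{ε→0+} ∫ conj(v(μ)) φ(μ)/(μ - λ - iε) dm(μ)`, is bounded on its domain, then
`∫ |v(μ)|²/|μ - λ|² dm(μ) < ∞`. -/
theorem X_lambda_bounded_implies_finite
    (m : Measure ℝ) [IsFiniteMeasure m]
    (v : ℝ → ℂ) (hv : MemLp v 2 m) (lam : ℝ)
    (hbdd : ∃ C : ℝ, ∀ (φ : ℝ → ℂ) (L : ℂ), MemLp φ 2 m →
      Tendsto
        (fun ε : ℝ => ∫ μ, (starRingEnd ℂ) (v μ) * φ μ / ((μ : ℂ) - (lam : ℂ) - ε * I) ∂m)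
        (𝓝[>] 0) (𝓝 L) →
      ‖L‖ ≤ C * (eLpNorm φ 2 m).toReal) :
    Integrable (fun μ : ℝ => ‖v μ‖ ^ 2 / |μ - lam| ^ 2) m := by
  obtain ⟨C₀, hC₀⟩ := hbdd
  set C : ℝ := max C₀ 0 with hCdef
  have hC0 : (0:ℝ) ≤ C := le_max_right _ _
  -- integrability of ‖v‖²
  have hv2 : Integrable (fun μ => ‖v μ‖ ^ 2) m := by
    have h := hv.integrable_norm_rpow two_ne_zero ENNReal.ofNat_ne_top
    simpa [ENNReal.toReal_ofNat, Real.rpow_natCast] using h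
  have hvm : AEMeasurable v m := hv.1.aemeasurable
  -- the real integrand and its indicator truncations
  set f : ℝ → ℝ := fun μ => ‖v μ‖ ^ 2 / |μ - lam| ^ 2 with hfdef
  have hfnn : ∀ μ, 0 ≤ f μ := fun μ => div_nonneg (by positivity) (by positivity)
  have hfm : AEMeasurable f m := by
    exact ((hvm.norm.pow_const 2).div
      (((_root_.continuous_abs.comp (continuous_id.sub continuous_const)).pow 2).measurable.aemeasurable))
  set s : ℝ → Set ℝ := fun δ => {μ : ℝ | δ ≤ |μ - lam|} with hsdef
  have hsm : ∀ δ, MeasurableSet (s δ) := by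
    intro δ
    exact measurableSet_le measurable_const
      ((_root_.continuous_abs.comp (continuous_id.sub continuous_const)).measurable)
  set g : ℝ → ℝ → ℝ := fun δ => (s δ).indicator f with hgdef
  have hgm : ∀ δ, AEMeasurable (g δ) m := fun δ => hfm.indicator (hsm δ)
  have hgint : ∀ δ : ℝ, 0 < δ → Integrable (g δ) m := by
    intro δ hδ
    refine Integrable.mono' (hv2.const_mul (δ⁻¹^2)) (hgm δ).aestronglyMeasurable ?_
    refine Eventually.of_forall fun μ => ?_
    rw [Real.norm_eq_abs, _root_.abs_of_nonneg (Set.indicator_nonneg (fun x _ => hfnn x) μ)]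
    by_cases hμ : μ ∈ s δ
    · simp only [hgdef, Set.indicator_of_mem hμ]
      have h1 : δ ≤ |μ - lam| := hμ
      have h2 : (0:ℝ) < |μ - lam| := lt_of_lt_of_le hδ h1
      rw [hfdef, div_le_iff₀ (by positivity)]
      calc ‖v μ‖ ^ 2 = δ⁻¹ ^ 2 * ‖v μ‖ ^ 2 * δ ^ 2 := by
            field_simp
        _ ≤ δ⁻¹ ^ 2 * ‖v μ‖ ^ 2 * |μ - lam| ^ 2 := by
            gcongr
    · simp only [hgdef, Set.indicator_of_notMem hμ]; positivity
  -- the key uniform bound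
  have key : ∀ δ : ℝ, 0 < δ → ∫ μ, g δ μ ∂m ≤ C ^ 2 := by
    intro δ hδ
    set φ : ℝ → ℂ := (s δ).indicator (fun μ => v μ / ((μ:ℂ) - lam)) with hφdef
    have hcast : ∀ μ : ℝ, ((μ:ℂ) - (lam:ℂ)) = ((μ - lam : ℝ) : ℂ) := by
      intro μ; push_cast; ring
    have hφnorm : ∀ μ, ‖φ μ‖ ≤ δ⁻¹ * ‖v μ‖ := by
      intro μ
      by_cases hμ : μ ∈ s δ
      · rw [hφdef]; simp only [Set.indicator_of_mem hμ]
        have h1 : δ ≤ |μ - lam| := hμ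
        rw [norm_div, hcast, Complex.norm_real, Real.norm_eq_abs]
        rw [div_le_iff₀ (lt_of_lt_of_le hδ h1)]
        calc ‖v μ‖ = δ⁻¹ * ‖v μ‖ * δ := by field_simp
          _ ≤ δ⁻¹ * ‖v μ‖ * |μ - lam| := by gcongr
      · rw [hφdef]; simp only [Set.indicator_of_notMem hμ, norm_zero]; positivity
    have hφm : AEMeasurable φ m := by
      refine AEMeasurable.indicator ?_ (hsm δ)
      have hc : Continuous fun μ : ℝ => ((μ:ℂ) - (lam:ℂ)) :=
        Complex.continuous_ofReal.sub continuous_const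
      exact hvm.div hc.measurable.aemeasurable
    have hφ2 : MemLp φ 2 m :=
      MemLp.of_le_mul hv hφm.aestronglyMeasurable (Eventually.of_forall hφnorm)
    -- dominated convergence
    set Flim : ℝ → ℂ := fun μ => (starRingEnd ℂ) (v μ) * φ μ / ((μ:ℂ) - lam) with hFlimdef
    have htend : Tendsto
        (fun ε : ℝ => ∫ μ, (starRingEnd ℂ) (v μ) * φ μ / ((μ : ℂ) - (lam : ℂ) - ε * I) ∂m)
        (𝓝[>] 0) (𝓝 (∫ μ, Flim μ ∂m)) := by
      refine tendsto_integral_filter_of_dominated_convergence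
        (fun μ => δ⁻¹ ^ 2 * ‖v μ‖ ^ 2) ?_ ?_ (hv2.const_mul _) ?_
      · refine Eventually.of_forall fun ε => ?_
        refine AEMeasurable.aestronglyMeasurable ?_
        have hcj : AEMeasurable (fun μ => (starRingEnd ℂ) (v μ)) m :=
          Measurable.comp_aemeasurable' (RCLike.continuous_conj.measurable) hvm
        have hc : Continuous fun μ : ℝ => ((μ:ℂ) - (lam:ℂ) - (ε:ℂ) * I) :=
          (Complex.continuous_ofReal.sub continuous_const).sub continuous_const
        exact (hcj.mul hφm).div hc.measurable.aemeasurable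
      · refine Eventually.of_forall fun ε => Eventually.of_forall fun μ => ?_
        by_cases hμ : μ ∈ s δ
        · have h1 : δ ≤ |μ - lam| := hμ
          have hre : ((μ:ℂ) - (lam:ℂ) - (ε:ℂ) * I).re = μ - lam := by simp
          have hden : δ ≤ ‖(μ:ℂ) - (lam:ℂ) - (ε:ℂ) * I‖ := by
            refine le_trans h1 ?_
            rw [← hre]
            exact (Complex.abs_re_le_norm _)
          rw [norm_div]
          have hnum : ‖(starRingEnd ℂ) (v μ) * φ μ‖ ≤ ‖v μ‖ * (δ⁻¹ * ‖v μ‖) := by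
            rw [norm_mul, RCLike.norm_conj]
            exact mul_le_mul_of_nonneg_left (hφnorm μ) (norm_nonneg _)
          have hdenpos : (0:ℝ) < ‖(μ:ℂ) - (lam:ℂ) - (ε:ℂ) * I‖ := lt_of_lt_of_le hδ hden
          rw [div_le_iff₀ hdenpos]
          calc ‖(starRingEnd ℂ) (v μ) * φ μ‖ ≤ ‖v μ‖ * (δ⁻¹ * ‖v μ‖) := hnum
            _ = δ⁻¹ ^ 2 * ‖v μ‖ ^ 2 * δ := by field_simp
            _ ≤ δ⁻¹ ^ 2 * ‖v μ‖ ^ 2 * ‖(μ:ℂ) - (lam:ℂ) - (ε:ℂ) * I‖ :=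
                mul_le_mul_of_nonneg_left hden (by positivity)
        · have : φ μ = 0 := by simp only [hφdef, Set.indicator_of_notMem hμ]
          rw [this]
          simp only [mul_zero, zero_div, norm_zero]
          positivity
      · refine Eventually.of_forall fun μ => ?_
        by_cases hμ : μ = lam
        · have hns : μ ∉ s δ := by
            simp only [hsdef, Set.mem_setOf_eq, hμ, sub_self, abs_zero, not_le]
            exact hδ
          have : φ μ = 0 := by simp only [hφdef, Set.indicator_of_notMem hns]
          simp only [this, mul_zero, zero_div, hFlimdef]
          exact tendsto_const_nhds
        · have hz : (μ:ℂ) - (lam:ℂ) ≠ 0 := by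
            rw [sub_ne_zero]
            exact_mod_cast hμ
          refine Tendsto.div tendsto_const_nhds ?_ hz
          have hcont : Tendsto (fun ε : ℝ => (μ:ℂ) - (lam:ℂ) - (ε:ℂ) * I) (𝓝 0)
              (𝓝 ((μ:ℂ) - (lam:ℂ))) := by
            have : Continuous fun ε : ℝ => (μ:ℂ) - (lam:ℂ) - (ε:ℂ) * I :=
              continuous_const.sub (Complex.continuous_ofReal.mul continuous_const)
            have h0 := this.tendsto 0
            simpa using h0
          exact hcont.mono_left nhdsWithin_le_nhds
    have hbound := hC₀ φ (∫ μ, Flim μ ∂m) hφ2 htend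
    have hbound' : ‖∫ μ, Flim μ ∂m‖ ≤ C * (eLpNorm φ 2 m).toReal :=
      le_trans hbound (mul_le_mul_of_nonneg_right (le_max_left _ _) ENNReal.toReal_nonneg)
    -- identify the limit with the real integral
    have hFlim_eq : ∀ μ, Flim μ = ((g δ μ : ℝ) : ℂ) := by
      intro μ
      by_cases hμ : μ ∈ s δ
      · rw [hFlimdef, hφdef, hgdef]
        simp only [Set.indicator_of_mem hμ]
        rw [hcast, mul_div_assoc', div_div, ← sq]
        rw [Complex.conj_mul']
        rw [hfdef]
        push_cast [_root_.sq_abs]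
        ring
      · rw [hFlimdef, hφdef, hgdef]
        simp only [Set.indicator_of_notMem hμ, mul_zero, zero_div, Complex.ofReal_zero]
    have hInt_eq : (∫ μ, Flim μ ∂m) = ((∫ μ, g δ μ ∂m : ℝ) : ℂ) := by
      simp_rw [hFlim_eq]
      exact integral_ofReal
    have hA_nn : 0 ≤ ∫ μ, g δ μ ∂m :=
      integral_nonneg (fun μ => Set.indicator_nonneg (fun x _ => hfnn x) μ)
    have hnorm_eq : ‖∫ μ, Flim μ ∂m‖ = ∫ μ, g δ μ ∂m := by
      rw [hInt_eq, Complex.norm_real, Real.norm_eq_abs, _root_.abs_of_nonneg hA_nn]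
    -- compute the eLpNorm
    have hsnorm : (eLpNorm φ 2 m).toReal = Real.sqrt (∫ μ, g δ μ ∂m) := by
      rw [hφ2.eLpNorm_eq_integral_rpow_norm two_ne_zero ENNReal.ofNat_ne_top]
      have h2 : ((2:ℝ≥0∞)).toReal = (2:ℝ) := by simp
      have hφg : ∀ μ, ‖φ μ‖ ^ ((2:ℝ≥0∞)).toReal = g δ μ := by
        intro μ
        rw [h2, show ((2:ℝ)) = ((2:ℕ):ℝ) from by norm_num, Real.rpow_natCast]
        by_cases hμ : μ ∈ s δ
        · simp only [hφdef, hgdef, Set.indicator_of_mem hμ]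
          rw [norm_div, hcast, Complex.norm_real, Real.norm_eq_abs, div_pow]
        · simp only [hφdef, hgdef, Set.indicator_of_notMem hμ, norm_zero]
          norm_num
      simp_rw [hφg]
      rw [ENNReal.toReal_ofReal (Real.rpow_nonneg hA_nn _)]
      rw [Real.sqrt_eq_rpow, h2]
      norm_num
    rw [hnorm_eq, hsnorm] at hbound'
    have hsq := Real.sq_sqrt hA_nn
    nlinarith [Real.sqrt_nonneg (∫ μ, g δ μ ∂m), sq_nonneg (Real.sqrt (∫ μ, g δ μ ∂m) - C)]
  -- monotone convergence
  refine ⟨hfm.aestronglyMeasurable, ?_⟩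
  rw [hasFiniteIntegral_iff_norm]
  have hnorm : ∀ μ, ENNReal.ofReal ‖f μ‖ = ENNReal.ofReal (f μ) := by
    intro μ; rw [Real.norm_eq_abs, _root_.abs_of_nonneg (hfnn μ)]
  simp_rw [hnorm]
  set δseq : ℕ → ℝ := fun n => 1 / (n + 1) with hδseq
  have hδpos : ∀ n, 0 < δseq n := fun n => by positivity
  have hmono : ∀ μ, Monotone fun n : ℕ => ENNReal.ofReal (g (δseq n) μ) := by
    intro μ i j hij
    refine ENNReal.ofReal_le_ofReal ?_
    refine Set.indicator_le_indicator_of_subset ?_ hfnn μ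
    intro x hx
    have hx' : δseq i ≤ |x - lam| := hx
    show δseq j ≤ |x - lam|
    refine le_trans ?_ hx'
    rw [hδseq]
    apply one_div_le_one_div_of_le
    · positivity
    · have hij' : (i:ℝ) ≤ j := by exact_mod_cast hij
      linarith
  have hsup : ∀ μ, (⨆ n : ℕ, ENNReal.ofReal (g (δseq n) μ)) = ENNReal.ofReal (f μ) := by
    intro μ
    refine le_antisymm (iSup_le fun n => ENNReal.ofReal_le_ofReal ?_) ?_
    · exact Set.indicator_le_self' (fun x _ => hfnn x) μ
    by_cases hμ : μ = lam
    · have : f μ = 0 := by rw [hfdef, hμ]; simp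
      rw [this]; simp
    · have habs : 0 < |μ - lam| := by
        rw [abs_pos, sub_ne_zero]; exact hμ
      obtain ⟨n, hn⟩ := exists_nat_one_div_lt habs
      have hmem : μ ∈ s (δseq n) := by
        show δseq n ≤ |μ - lam|
        rw [hδseq]
        exact le_of_lt hn
      have : g (δseq n) μ = f μ := by exact Set.indicator_of_mem hmem f
      calc ENNReal.ofReal (f μ) = ENNReal.ofReal (g (δseq n) μ) := by rw [this]
        _ ≤ ⨆ n : ℕ, ENNReal.ofReal (g (δseq n) μ) := le_iSup (fun n : ℕ => ENNReal.ofReal (g (δseq n) μ)) n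
  calc (∫⁻ μ, ENNReal.ofReal (f μ) ∂m)
      = ∫⁻ μ, ⨆ n : ℕ, ENNReal.ofReal (g (δseq n) μ) ∂m := by
        refine lintegral_congr fun μ => (hsup μ).symm
    _ = ⨆ n : ℕ, ∫⁻ μ, ENNReal.ofReal (g (δseq n) μ) ∂m := by
        refine lintegral_iSup' (fun n => (hgm _).ennreal_ofReal) ?_
        exact Eventually.of_forall hmono
    _ ≤ ENNReal.ofReal (C ^ 2) := by
        refine iSup_le fun n => ?_
        rw [← ofReal_integral_eq_lintegral_ofReal (hgint _ (hδpos n))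
          (Eventually.of_forall fun μ => Set.indicator_nonneg (fun x _ => hfnn x) μ)]
        exact ENNReal.ofReal_le_ofReal (key _ (hδpos n))
    _ < ⊤ := ENNReal.ofReal_lt_top
end

section
/- Let m be a compactly supported Borel measure on ℝ, v ∈ L²(ℝ,m), and λ ∈ ℝ such that the limit ∫ |v(μ)|²/(μ − λ − i0) dm(μ) := lim_{ε→0+} ∫ |v(μ)|²/(μ − λ − iε) dm(μ) exists finitely. Then the set D = {φ : φ(μ) = v(μ)ψ(μ), ψ continuously differentiable on ℝ} is contained in Dom(X_λ); in particular, if v is a cyclic vector for multiplication by the independent variable on L²(ℝ,m), then X_λ is densely defined. -/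
open MeasureTheory Filter Topology Complex

private lemma eps_le_norm_denom (μ lam ε : ℝ) (hε : 0 < ε) :
    ε ≤ ‖(μ:ℂ) - lam - ε * I‖ := by
  calc ε = |(((μ:ℂ) - lam - ε * I).im)| := by simp [abs_of_pos hε]
  _ ≤ _ := by exact Complex.abs_im_le_norm _

private lemma re_le_norm_denom (μ lam ε : ℝ) : |μ - lam| ≤ ‖(μ:ℂ) - lam - ε * I‖ := by
  calc |μ - lam| = |(((μ:ℂ) - lam - ε * I).re)| := by simp
  _ ≤ _ := by exact Complex.abs_re_le_norm _

private lemma conj_mul_mul (z w : ℂ) : (starRingEnd ℂ) z * (z * w) = ((‖z‖:ℂ)) ^ 2 * w := by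
  rw [← mul_assoc, mul_comm ((starRingEnd ℂ) z) z, Complex.mul_conj']

/-- The key analytic lemma: decomposition `ψ(μ) = ψ(λ) + (ψ(μ) - ψ(λ))` plus dominated
convergence. -/
private lemma key_tendsto
    (m : Measure ℝ) [IsFiniteMeasure m]
    (K : Set ℝ) (hK : IsCompact K) (hmK : m Kᶜ = 0)
    (v : ℝ → ℂ) (hv : MemLp v 2 m) (lam : ℝ) (L0 : ℂ)
    (hlim : Tendsto (fun ε : ℝ => ∫ μ, (‖v μ‖ ^ 2 : ℂ) / ((μ : ℂ) - (lam : ℂ) - ε * I) ∂m)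
      (𝓝[>] 0) (𝓝 L0))
    (ψ : ℝ → ℂ) (hψ : ContDiff ℝ 1 ψ) :
    ∃ L : ℂ, Tendsto (fun ε : ℝ =>
        ∫ μ, (starRingEnd ℂ) (v μ) * (v μ * ψ μ) / ((μ : ℂ) - (lam : ℂ) - ε * I) ∂m)
      (𝓝[>] 0) (𝓝 L) := by
  have haeK : ∀ᵐ μ ∂m, μ ∈ K := by
    rw [MeasureTheory.ae_iff]; exact hmK
  have hVint : Integrable (fun μ => ‖v μ‖ ^ 2) m := by
    have h := hv.integrable_norm_rpow two_ne_zero ENNReal.ofNat_ne_top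
    refine h.congr (Eventually.of_forall fun x => ?_)
    show ‖v x‖ ^ ((2:ENNReal).toReal) = ‖v x‖ ^ 2
    rw [show ((2:ENNReal).toReal) = (2:ℝ) by simp, Real.rpow_two]
  have hVmeas : AEStronglyMeasurable (fun μ => ((‖v μ‖:ℂ)) ^ 2) m :=
    ((Complex.measurable_ofReal.comp_aemeasurable hv.1.norm.aemeasurable).pow_const
      2).aestronglyMeasurable
  have hVnorm : ∀ μ : ℝ, ‖((‖v μ‖:ℂ)) ^ 2‖ = ‖v μ‖ ^ 2 := fun μ => by
    simp [norm_pow, Complex.norm_real]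
  have hdcont : ∀ ε : ℝ, Continuous (fun μ : ℝ => (μ:ℂ) - lam - ε * I) := fun ε =>
    (Complex.continuous_ofReal.sub continuous_const).sub continuous_const
  have hdnorm : ∀ ε : ℝ, 0 < ε → ∀ μ : ℝ, 0 < ‖(μ:ℂ) - lam - ε * I‖ := fun ε hε μ =>
    lt_of_lt_of_le hε (eps_le_norm_denom μ lam ε hε)
  -- derivative bound on a compact convex set
  obtain ⟨r, hr⟩ := hK.isBounded.subset_closedBall 0
  set K' : Set ℝ := Set.Icc (min (-r) lam) (max r lam) with hK'def
  have hK'cpt : IsCompact K' := isCompact_Icc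
  have hK'conv : Convex ℝ K' := convex_Icc _ _
  have hlamK' : lam ∈ K' := ⟨min_le_right _ _, le_max_right _ _⟩
  have hKK' : K ⊆ K' := by
    intro x hx
    have := hr hx
    rw [Real.closedBall_eq_Icc] at this
    constructor
    · exact le_trans (min_le_left _ _) (by linarith [this.1])
    · exact le_trans (by linarith [this.2]) (le_max_left _ _)
  have hderc : Continuous (deriv ψ) := hψ.continuous_deriv le_rfl
  obtain ⟨C0, hC0⟩ := hK'cpt.exists_bound_of_continuousOn hderc.continuousOn
  set C : ℝ := max C0 0 with hCdef
  have hC : 0 ≤ C := le_max_right _ _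
  have hMVT : ∀ μ ∈ K, ‖ψ μ - ψ lam‖ ≤ C * |μ - lam| := by
    intro μ hμ
    have hbd : ∀ x ∈ K', ‖deriv ψ x‖ ≤ C := fun x hx => le_trans (hC0 x hx) (le_max_left C0 0)
    have := hK'conv.norm_image_sub_le_of_norm_deriv_le
      (fun x _ => (hψ.differentiable one_ne_zero).differentiableAt) hbd hlamK' (hKK' hμ)
    simpa [Real.norm_eq_abs] using this
  -- bound on the F-part
  have hquot : ∀ ε : ℝ, 0 < ε → ∀ μ ∈ K,
      ‖((‖v μ‖:ℂ)) ^ 2 * (ψ μ - ψ lam) / ((μ:ℂ) - lam - ε * I)‖ ≤ ‖v μ‖ ^ 2 * C := by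
    intro ε hε μ hμ
    rw [norm_div, norm_mul, hVnorm]
    rw [div_le_iff₀ (hdnorm ε hε μ)]
    have h1 : ‖ψ μ - ψ lam‖ ≤ C * ‖(μ:ℂ) - lam - ε * I‖ :=
      le_trans (hMVT μ hμ) (mul_le_mul_of_nonneg_left (re_le_norm_denom μ lam ε) hC)
    have h2 : (0:ℝ) ≤ ‖v μ‖ ^ 2 := sq_nonneg _
    nlinarith [norm_nonneg ((μ:ℂ) - lam - ε * I)]
  -- integrability of the two pieces, for fixed ε > 0
  have hFmeas : ∀ ε : ℝ, AEStronglyMeasurable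
      (fun μ => ((‖v μ‖:ℂ)) ^ 2 * (ψ μ - ψ lam) / ((μ:ℂ) - lam - ε * I)) m := fun ε =>
    (((hVmeas.mul ((hψ.continuous.sub continuous_const).aestronglyMeasurable)).aemeasurable.div
      ((hdcont ε).aestronglyMeasurable.aemeasurable))).aestronglyMeasurable
  have hGmeas : ∀ ε : ℝ, AEStronglyMeasurable
      (fun μ => ((‖v μ‖:ℂ)) ^ 2 * ψ lam / ((μ:ℂ) - lam - ε * I)) m := fun ε =>
    (((hVmeas.mul aestronglyMeasurable_const).aemeasurable.div
      ((hdcont ε).aestronglyMeasurable.aemeasurable))).aestronglyMeasurable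
  have hFint : ∀ ε : ℝ, 0 < ε → Integrable
      (fun μ => ((‖v μ‖:ℂ)) ^ 2 * (ψ μ - ψ lam) / ((μ:ℂ) - lam - ε * I)) m := by
    intro ε hε
    refine Integrable.mono' (hVint.mul_const C) (hFmeas ε) ?_
    filter_upwards [haeK] with μ hμ
    exact hquot ε hε μ hμ
  have hGint : ∀ ε : ℝ, 0 < ε → Integrable
      (fun μ => ((‖v μ‖:ℂ)) ^ 2 * ψ lam / ((μ:ℂ) - lam - ε * I)) m := by
    intro ε hε
    refine Integrable.mono' (hVint.mul_const (‖ψ lam‖ * ε⁻¹)) (hGmeas ε) ?_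
    refine Eventually.of_forall fun μ => ?_
    rw [norm_div, norm_mul, hVnorm, div_le_iff₀ (hdnorm ε hε μ)]
    have h1 : ε ≤ ‖(μ:ℂ) - lam - ε * I‖ := eps_le_norm_denom μ lam ε hε
    have key : ‖v μ‖ ^ 2 * ‖ψ lam‖ = ‖v μ‖ ^ 2 * (‖ψ lam‖ * ε⁻¹) * ε := by
      field_simp
    rw [key]
    exact mul_le_mul_of_nonneg_left h1 (by positivity)
  -- limit of the G-part
  have hG : Tendsto (fun ε : ℝ =>
      ∫ μ, ((‖v μ‖:ℂ)) ^ 2 * ψ lam / ((μ:ℂ) - lam - ε * I) ∂m) (𝓝[>] 0)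
      (𝓝 (ψ lam * L0)) := by
    have heq : ∀ ε : ℝ, ∫ μ, ((‖v μ‖:ℂ)) ^ 2 * ψ lam / ((μ:ℂ) - lam - ε * I) ∂m
        = ψ lam * ∫ μ, (‖v μ‖ ^ 2 : ℂ) / ((μ : ℂ) - (lam : ℂ) - ε * I) ∂m := by
      intro ε
      rw [← integral_const_mul]
      congr 1; funext μ; ring
    rw [show (fun ε : ℝ => ∫ μ, ((‖v μ‖:ℂ)) ^ 2 * ψ lam / ((μ:ℂ) - lam - ε * I) ∂m)
        = fun ε : ℝ => ψ lam * ∫ μ, (‖v μ‖ ^ 2 : ℂ) / ((μ : ℂ) - (lam : ℂ) - ε * I) ∂m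
      from funext heq]
    exact hlim.const_mul (ψ lam)
  -- limit of the F-part by dominated convergence
  have hF : Tendsto (fun ε : ℝ =>
      ∫ μ, ((‖v μ‖:ℂ)) ^ 2 * (ψ μ - ψ lam) / ((μ:ℂ) - lam - ε * I) ∂m) (𝓝[>] 0)
      (𝓝 (∫ μ, ((‖v μ‖:ℂ)) ^ 2 * (ψ μ - ψ lam) / ((μ:ℂ) - lam) ∂m)) := by
    refine tendsto_integral_filter_of_dominated_convergence
      (fun μ => ‖v μ‖ ^ 2 * C) (Eventually.of_forall fun ε => hFmeas ε) ?_ (hVint.mul_const C) ?_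
    · filter_upwards [self_mem_nhdsWithin] with ε (hε : 0 < ε)
      filter_upwards [haeK] with μ hμ
      exact hquot ε hε μ hμ
    · refine Eventually.of_forall fun μ => ?_
      by_cases hμl : μ = lam
      · subst hμl
        simp only [sub_self, mul_zero, zero_div]
        exact tendsto_const_nhds
      · have hne : ((μ:ℂ) - lam) ≠ 0 := by
          rw [sub_ne_zero]
          exact_mod_cast fun h => hμl (Complex.ofReal_injective h)
        have hden : Tendsto (fun ε : ℝ => (μ:ℂ) - lam - ε * I) (𝓝[>] 0) (𝓝 ((μ:ℂ) - lam)) := by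
          have hc : Continuous (fun ε : ℝ => (μ:ℂ) - lam - (ε:ℂ) * I) :=
            continuous_const.sub (Complex.continuous_ofReal.mul continuous_const)
          have := (hc.tendsto 0).mono_left (nhdsWithin_le_nhds (s := Set.Ioi (0:ℝ)))
          simpa using this
        exact Tendsto.div tendsto_const_nhds hden hne
  -- combine
  refine ⟨ψ lam * L0 + ∫ μ, ((‖v μ‖:ℂ)) ^ 2 * (ψ μ - ψ lam) / ((μ:ℂ) - lam) ∂m, ?_⟩
  have hsum := hG.add hF
  refine hsum.congr' ?_
  filter_upwards [self_mem_nhdsWithin] with ε (hε : 0 < ε)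
  rw [← integral_add (hGint ε hε) (hFint ε hε)]
  congr 1; funext μ
  rw [conj_mul_mul]
  rw [← add_div]
  ring_nf

/-- If the boundary value `∫ |v(μ)|²/(μ - λ - i0) dm(μ)` exists finitely,
then every function of the form `φ = v·ψ` with `ψ` continuously differentiable lies in the
domain of `X_λ`; in particular, if `v` is cyclic for multiplication by the independent variable
on `L²(ℝ,m)`, then `X_λ` is densely defined. -/
theorem X_lambda_densely_defined
    (m : Measure ℝ) [IsFiniteMeasure m]
    (K : Set ℝ) (hK : IsCompact K) (hmK : m Kᶜ = 0)
    (v : ℝ → ℂ) (hv : MemLp v 2 m) (lam : ℝ)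
    (hlim : ∃ L0 : ℂ, Tendsto
      (fun ε : ℝ => ∫ μ, (‖v μ‖ ^ 2 : ℂ) / ((μ : ℂ) - (lam : ℂ) - ε * I) ∂m)
      (𝓝[>] 0) (𝓝 L0)) :
    (∀ ψ : ℝ → ℂ, ContDiff ℝ 1 ψ → ∃ L : ℂ, Tendsto
      (fun ε : ℝ =>
        ∫ μ, (starRingEnd ℂ) (v μ) * (v μ * ψ μ) / ((μ : ℂ) - (lam : ℂ) - ε * I) ∂m)
      (𝓝[>] 0) (𝓝 L)) ∧
    (Dense ((Submodule.span ℂ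
        {f : Lp ℂ 2 m | ∃ n : ℕ, ∀ᵐ μ ∂m, f μ = (μ : ℂ) ^ n * v μ} : Submodule ℂ (Lp ℂ 2 m))
          : Set (Lp ℂ 2 m)) →
      Dense {φ : Lp ℂ 2 m | ∃ L : ℂ, Tendsto
        (fun ε : ℝ =>
          ∫ μ, (starRingEnd ℂ) (v μ) * φ μ / ((μ : ℂ) - (lam : ℂ) - ε * I) ∂m)
        (𝓝[>] 0) (𝓝 L)}) := by
  obtain ⟨L0, hlim0⟩ := hlim
  have part1 : ∀ ψ : ℝ → ℂ, ContDiff ℝ 1 ψ → ∃ L : ℂ, Tendsto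
      (fun ε : ℝ =>
        ∫ μ, (starRingEnd ℂ) (v μ) * (v μ * ψ μ) / ((μ : ℂ) - (lam : ℂ) - ε * I) ∂m)
      (𝓝[>] 0) (𝓝 L) := fun ψ hψ => key_tendsto m K hK hmK v hv lam L0 hlim0 ψ hψ
  refine ⟨part1, ?_⟩
  intro hdense
  refine hdense.mono ?_
  -- integrability helper
  have hIA : ∀ (φ : Lp ℂ 2 m) (ε : ℝ), 0 < ε →
      Integrable (fun μ => (starRingEnd ℂ) (v μ) * φ μ / ((μ:ℂ) - lam - ε * I)) m := by
    intro φ ε hε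
    have h1 : Integrable (fun μ => (starRingEnd ℂ) (v μ) * φ μ) m := by
      have h := L2.integrable_inner (𝕜 := ℂ) (hv.toLp v) φ
      refine h.congr ?_
      filter_upwards [MemLp.coeFn_toLp hv] with x hx
      rw [RCLike.inner_apply, hx, mul_comm]
    have hne : ∀ μ : ℝ, ((μ:ℂ) - lam - ε * I) ≠ 0 := fun μ =>
      norm_pos_iff.mp (lt_of_lt_of_le hε (eps_le_norm_denom μ lam ε hε))
    have hcont : Continuous (fun μ : ℝ => ((μ:ℂ) - lam - ε * I)⁻¹) :=
      Continuous.inv₀ ((Complex.continuous_ofReal.sub continuous_const).sub continuous_const)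
        hne
    have h2 := h1.bdd_mul (c := ε⁻¹) hcont.aestronglyMeasurable (Eventually.of_forall fun μ => by
      rw [norm_inv]
      exact inv_anti₀ hε (eps_le_norm_denom μ lam ε hε))
    refine h2.congr (Eventually.of_forall fun μ => ?_)
    simp only [div_eq_mul_inv]; ring
  intro g hg
  refine Submodule.span_induction ?_ ?_ ?_ ?_ hg
  · -- generators
    rintro f ⟨n, hfn⟩
    obtain ⟨L, hL⟩ := part1 (fun μ : ℝ => ((μ:ℂ)) ^ n) ((Complex.ofRealCLM.contDiff).pow n)
    refine ⟨L, hL.congr fun ε => integral_congr_ae ?_⟩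
    filter_upwards [hfn] with μ hμ
    rw [hμ]; ring_nf
  · -- zero
    refine ⟨0, ?_⟩
    have hz : ∀ ε : ℝ,
        (∫ μ, (starRingEnd ℂ) (v μ) * (0 : Lp ℂ 2 m) μ / ((μ:ℂ) - lam - ε * I) ∂m) = 0 := by
      intro ε
      have h0 : (fun μ => (starRingEnd ℂ) (v μ) * (0 : Lp ℂ 2 m) μ / ((μ:ℂ) - lam - ε * I))
          =ᵐ[m] fun _ => (0:ℂ) := by
        filter_upwards [Lp.coeFn_zero ℂ 2 m] with μ hμ
        rw [hμ]; simp
      rw [integral_congr_ae h0, integral_zero]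
    exact tendsto_const_nhds.congr fun ε => (hz ε).symm
  · -- add
    rintro x y _ _ ⟨Lx, hLx⟩ ⟨Ly, hLy⟩
    refine ⟨Lx + Ly, (hLx.add hLy).congr' ?_⟩
    filter_upwards [self_mem_nhdsWithin] with ε (hε : 0 < ε)
    rw [← integral_add (hIA x ε hε) (hIA y ε hε)]
    refine integral_congr_ae ?_
    filter_upwards [Lp.coeFn_add x y] with μ hμ
    rw [hμ, Pi.add_apply]; ring
  · -- smul
    rintro c x _ ⟨Lx, hLx⟩
    refine ⟨c * Lx, (hLx.const_mul c).congr fun ε => ?_⟩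
    rw [← integral_const_mul]
    refine integral_congr_ae ?_
    filter_upwards [Lp.coeFn_smul c x] with μ hμ
    rw [hμ, Pi.smul_apply, smul_eq_mul]; ring
end

section
/- Let m be a compactly supported Borel measure, v ∈ L²(ℝ,m), a1 ∈ ℝ, and let A0 be multiplication by the independent variable on H0 = L²(ℝ,m), A1 = a1 on H1 = ℂ, V : ℂ → H0 given by V c = c v. Suppose λ ∈ ℝ satisfies a1 − λ = ∫ |v(μ)|²/(μ − λ − i0) dm(μ) (the limit existing finitely). Then the operator X_λ φ = ∫ \overline{v} φ/(μ − λ − i0) dm, with its natural domain, is a strong solution of the Riccati equation A1 X − X A0 − X V X + V* = 0. -/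
open MeasureTheory Filter Topology Complex

private lemma conj_mul_self_eq (z : ℂ) : (starRingEnd ℂ) z * z = (‖z‖ : ℂ) ^ 2 := by
  rw [mul_comm, Complex.mul_conj, Complex.normSq_eq_norm_sq]
  push_cast
  ring

private lemma denom_ne_zero {μ lam ε : ℝ} (hε : 0 < ε) :
    (μ : ℂ) - (lam : ℂ) - ε * I ≠ 0 := by
  intro h
  have him : ((μ : ℂ) - (lam : ℂ) - ε * I).im = 0 := by rw [h]; simp
  simp [Complex.sub_im, Complex.mul_im] at him
  linarith

private lemma norm_denom_inv_le {μ lam ε : ℝ} (hε : 0 < ε) :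
    ‖((μ : ℂ) - (lam : ℂ) - ε * I)⁻¹‖ ≤ ε⁻¹ := by
  rw [norm_inv]
  have hle : ε ≤ ‖(μ : ℂ) - (lam : ℂ) - ε * I‖ := by
    calc ε = |(-ε)| := by rw [abs_neg, abs_of_pos hε]
    _ = |((μ : ℂ) - (lam : ℂ) - ε * I).im| := by
        simp [Complex.sub_im, Complex.mul_im]
    _ ≤ ‖(μ : ℂ) - (lam : ℂ) - ε * I‖ := Complex.abs_im_le_norm _
    _ = ‖(μ : ℂ) - (lam : ℂ) - ε * I‖ := rfl
  exact inv_anti₀ hε hle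

/-- Let `A0` be multiplication by the independent variable on
`H0 = L²(ℝ,m)`, `A1 = a1` on `H1 = ℂ`, `V c = c·v`, and suppose `λ ∈ ℝ` satisfies
`a1 - λ = ∫ |v(μ)|²/(μ - λ - i0) dm(μ)` (the boundary value existing finitely).  Then the
functional `X_λ φ = ∫ conj(v) φ/(μ - λ - i0) dm`, on its natural domain, is a strong solution
of the Riccati equation `A1 X - X A0 - X V X + V* = 0`: the domain is invariant under
`A0 + V X_λ`, and `a1·X_λ φ - X_λ((A0 + V X_λ)φ) + ⟨v, φ⟩ = 0` on the domain. -/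
theorem X_lambda_strong_solution_of_riccati
    (m : Measure ℝ) [IsFiniteMeasure m]
    (K : Set ℝ) (hK : IsCompact K) (hmK : m Kᶜ = 0)
    (v : ℝ → ℂ) (hv : MemLp v 2 m) (a1 lam : ℝ)
    (hlim : Tendsto
      (fun ε : ℝ => ∫ μ, (‖v μ‖ ^ 2 : ℂ) / ((μ : ℂ) - (lam : ℂ) - ε * I) ∂m)
      (𝓝[>] 0) (𝓝 ((a1 : ℂ) - (lam : ℂ)))) :
    ∀ (φ : ℝ → ℂ) (L : ℂ), MemLp φ 2 m →
      Tendsto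
        (fun ε : ℝ => ∫ μ, (starRingEnd ℂ) (v μ) * φ μ / ((μ : ℂ) - (lam : ℂ) - ε * I) ∂m)
        (𝓝[>] 0) (𝓝 L) →
      -- `(A0 + V X_λ) φ` again belongs to `L²` and to the domain of `X_λ`, ...
      MemLp (fun μ : ℝ => (μ : ℂ) * φ μ + L * v μ) 2 m ∧
      ∃ L' : ℂ, Tendsto
          (fun ε : ℝ => ∫ μ, (starRingEnd ℂ) (v μ) * ((μ : ℂ) * φ μ + L * v μ) /
            ((μ : ℂ) - (lam : ℂ) - ε * I) ∂m)
          (𝓝[>] 0) (𝓝 L') ∧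
        -- ... and the Riccati equation `A1 X φ - X (A0 + V X) φ + V* φ = 0` holds:
        (a1 : ℂ) * L - L' + ∫ μ, (starRingEnd ℂ) (v μ) * φ μ ∂m = 0 := by
  intro φ L hφ hX
  -- a.e. membership in K and boundedness of the independent variable
  have haeK : ∀ᵐ μ ∂m, μ ∈ K := by
    rw [ae_iff]
    exact hmK
  obtain ⟨C, hC⟩ := hK.isBounded.subset_closedBall 0
  have hid : MemLp (fun μ : ℝ => (μ : ℂ)) ⊤ m := by
    refine memLp_top_of_bound Complex.measurable_ofReal.aestronglyMeasurable C ?_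
    filter_upwards [haeK] with μ hμ
    have := hC hμ
    rw [Metric.mem_closedBall, Real.dist_0_eq_abs] at this
    simpa [Complex.norm_real, Real.norm_eq_abs] using this
  have h1 : MemLp (fun μ : ℝ => (μ : ℂ) * φ μ) 2 m := by
    exact hφ.smul hid
  have hL2 : MemLp (fun μ : ℝ => (μ : ℂ) * φ μ + L * v μ) 2 m :=
    h1.add (hv.const_mul L)
  -- conjugate of v
  have hvc : MemLp (fun μ => (starRingEnd ℂ) (v μ)) 2 m := by
    refine ⟨Complex.continuous_conj.comp_aestronglyMeasurable hv.1, ?_⟩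
    rw [show (fun μ => (starRingEnd ℂ) (v μ)) = (starRingEnd (ℝ → ℂ)) v from rfl,
      eLpNorm_conj]
    exact hv.2
  -- integrability of the products
  have hint_vφ : Integrable (fun μ => (starRingEnd ℂ) (v μ) * φ μ) m := by
    rw [← memLp_one_iff_integrable]
    have := hφ.smul hvc (p := 2) (q := 2) (r := 1)
    exact this
  have hint_vv : Integrable (fun μ => (‖v μ‖ : ℂ) ^ 2) m := by
    have h0 : Integrable (fun μ => (starRingEnd ℂ) (v μ) * v μ) m := by
      rw [← memLp_one_iff_integrable]
      have := hv.smul hvc (p := 2) (q := 2) (r := 1)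
      exact this
    exact h0.congr (Eventually.of_forall fun μ => conj_mul_self_eq (v μ))
  -- key integral identity for ε > 0
  have key : ∀ ε : ℝ, 0 < ε →
      (∫ μ, (starRingEnd ℂ) (v μ) * ((μ : ℂ) * φ μ + L * v μ) /
          ((μ : ℂ) - (lam : ℂ) - ε * I) ∂m)
      = (∫ μ, (starRingEnd ℂ) (v μ) * φ μ ∂m)
        + ((lam : ℂ) + ε * I) *
            (∫ μ, (starRingEnd ℂ) (v μ) * φ μ / ((μ : ℂ) - (lam : ℂ) - ε * I) ∂m)
        + L * (∫ μ, (‖v μ‖ ^ 2 : ℂ) / ((μ : ℂ) - (lam : ℂ) - ε * I) ∂m) := by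
    intro ε hε
    have hbdd : ∃ C, ∀ μ : ℝ, ‖(((μ : ℂ) - (lam : ℂ) - ε * I)⁻¹)‖ ≤ C :=
      ⟨ε⁻¹, fun μ => norm_denom_inv_le hε⟩
    have hdcont : Continuous fun μ : ℝ => (((μ : ℂ) - (lam : ℂ) - ε * I)⁻¹) :=
      ((Complex.continuous_ofReal.sub continuous_const).sub continuous_const).inv₀
        fun μ => denom_ne_zero hε
    have h2 : Integrable (fun μ : ℝ => ((μ : ℂ) - (lam : ℂ) - ε * I)⁻¹ *
        ((starRingEnd ℂ) (v μ) * φ μ)) m :=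
      hint_vφ.bdd_mul hdcont.aestronglyMeasurable (Eventually.of_forall fun μ => norm_denom_inv_le hε)
    have h3 : Integrable (fun μ : ℝ => ((μ : ℂ) - (lam : ℂ) - ε * I)⁻¹ * (‖v μ‖ : ℂ) ^ 2) m :=
      hint_vv.bdd_mul hdcont.aestronglyMeasurable (Eventually.of_forall fun μ => norm_denom_inv_le hε)
    have heq : ∀ μ : ℝ, (starRingEnd ℂ) (v μ) * ((μ : ℂ) * φ μ + L * v μ) /
          ((μ : ℂ) - (lam : ℂ) - ε * I)
        = (starRingEnd ℂ) (v μ) * φ μ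
          + (((lam : ℂ) + ε * I) * (((μ : ℂ) - (lam : ℂ) - ε * I)⁻¹ *
              ((starRingEnd ℂ) (v μ) * φ μ))
            + L * (((μ : ℂ) - (lam : ℂ) - ε * I)⁻¹ * (‖v μ‖ : ℂ) ^ 2)) := by
      intro μ
      have hd0 : (μ : ℂ) - (lam : ℂ) - ε * I ≠ 0 := denom_ne_zero hε
      rw [← conj_mul_self_eq]
      field_simp
      ring
    have hflip : ∀ g : ℝ → ℂ,
        (∫ μ, ((μ : ℂ) - (lam : ℂ) - ε * I)⁻¹ * g μ ∂m)
          = ∫ μ, g μ / ((μ : ℂ) - (lam : ℂ) - ε * I) ∂m := by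
      intro g
      refine integral_congr_ae (Eventually.of_forall fun μ => ?_)
      show ((μ : ℂ) - (lam : ℂ) - ε * I)⁻¹ * g μ = g μ / ((μ : ℂ) - (lam : ℂ) - ε * I)
      rw [div_eq_mul_inv, mul_comm]
    calc (∫ μ, (starRingEnd ℂ) (v μ) * ((μ : ℂ) * φ μ + L * v μ) /
            ((μ : ℂ) - (lam : ℂ) - ε * I) ∂m)
        = ∫ μ, ((starRingEnd ℂ) (v μ) * φ μ
            + (((lam : ℂ) + ε * I) * (((μ : ℂ) - (lam : ℂ) - ε * I)⁻¹ *
                ((starRingEnd ℂ) (v μ) * φ μ))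
              + L * (((μ : ℂ) - (lam : ℂ) - ε * I)⁻¹ * (‖v μ‖ : ℂ) ^ 2))) ∂m := by
          exact integral_congr_ae (Eventually.of_forall heq)
      _ = (∫ μ, (starRingEnd ℂ) (v μ) * φ μ ∂m)
          + (((lam : ℂ) + ε * I) *
              (∫ μ, ((μ : ℂ) - (lam : ℂ) - ε * I)⁻¹ * ((starRingEnd ℂ) (v μ) * φ μ) ∂m)
            + L * (∫ μ, ((μ : ℂ) - (lam : ℂ) - ε * I)⁻¹ * (‖v μ‖ : ℂ) ^ 2 ∂m)) := by
          have e1 := integral_add hint_vφ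
            ((h2.const_mul ((lam : ℂ) + ε * I)).add (h3.const_mul L))
          have e2 := integral_add (h2.const_mul ((lam : ℂ) + ε * I)) (h3.const_mul L)
          simp only [Pi.add_apply] at e1 e2
          rw [e1, e2, integral_const_mul, integral_const_mul]
      _ = _ := by
          rw [hflip (fun μ => (starRingEnd ℂ) (v μ) * φ μ),
            hflip (fun μ => (‖v μ‖ : ℂ) ^ 2)]
          ring
  refine ⟨hL2, (∫ μ, (starRingEnd ℂ) (v μ) * φ μ ∂m) + (a1 : ℂ) * L, ?_, by ring⟩
  have hcoef : Tendsto (fun ε : ℝ => (lam : ℂ) + ε * I) (𝓝[>] 0) (𝓝 (lam : ℂ)) := by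
    have : Tendsto (fun ε : ℝ => (lam : ℂ) + ε * I) (𝓝 0) (𝓝 ((lam : ℂ) + (0 : ℝ) * I)) :=
      (continuous_const.add (Complex.continuous_ofReal.mul continuous_const)).tendsto 0
    simpa using this.mono_left nhdsWithin_le_nhds
  have hT : Tendsto
      (fun ε : ℝ => (∫ μ, (starRingEnd ℂ) (v μ) * φ μ ∂m)
        + ((lam : ℂ) + ε * I) *
            (∫ μ, (starRingEnd ℂ) (v μ) * φ μ / ((μ : ℂ) - (lam : ℂ) - ε * I) ∂m)
        + L * (∫ μ, (‖v μ‖ ^ 2 : ℂ) / ((μ : ℂ) - (lam : ℂ) - ε * I) ∂m))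
      (𝓝[>] 0)
      (𝓝 ((∫ μ, (starRingEnd ℂ) (v μ) * φ μ ∂m) + (a1 : ℂ) * L)) := by
    have := ((tendsto_const_nhds (x := ∫ μ, (starRingEnd ℂ) (v μ) * φ μ ∂m)
        (f := 𝓝[>] (0:ℝ))).add (hcoef.mul hX)).add (hlim.const_mul L)
    have hval : (∫ μ, (starRingEnd ℂ) (v μ) * φ μ ∂m) + (lam : ℂ) * L
        + L * ((a1 : ℂ) - (lam : ℂ))
        = (∫ μ, (starRingEnd ℂ) (v μ) * φ μ ∂m) + (a1 : ℂ) * L := by ring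
    rwa [hval] at this
  refine hT.congr' ?_
  filter_upwards [self_mem_nhdsWithin] with ε hε
  exact (key ε hε).symm
end

section
/- Under the hypotheses of the previous statement, if additionally ∫ |v(μ)|²/|μ − λ|² dm(μ) = ∞ (i.e., λ ∈ S_sc), then the strong solution X_λ of the Riccati equation is an unbounded, densely defined, non-closable linear functional on L²(ℝ,m). -/
open MeasureTheory Filter Topology Complex


lemma bval (m : Measure ℝ) [IsFiniteMeasure m] (lam δ : ℝ) (hδ : 0 < δ)
    (g : ℝ → ℂ) (hg : Integrable g m)
    (hsupp : ∀ μ, g μ ≠ 0 → δ ≤ |μ - lam|) :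
    Tendsto (fun ε : ℝ => ∫ μ, g μ / ((μ : ℂ) - (lam : ℂ) - ε * I) ∂m) (𝓝[>] 0)
      (𝓝 (∫ μ, g μ / ((μ : ℂ) - (lam : ℂ)) ∂m)) := by
  apply tendsto_integral_filter_of_dominated_convergence (bound := fun μ => ‖g μ‖ / δ)
  · filter_upwards [self_mem_nhdsWithin] with ε (hε : 0 < ε)
    exact (hg.aemeasurable.div
      ((Complex.measurable_ofReal.sub measurable_const).sub measurable_const).aemeasurable).aestronglyMeasurable
  · filter_upwards [self_mem_nhdsWithin] with ε (hε : 0 < ε)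
    refine Eventually.of_forall fun μ => ?_
    rcases eq_or_ne (g μ) 0 with h | h
    · simp [h, div_nonneg (norm_nonneg _) hδ.le]
    · have h1 : δ ≤ ‖(μ : ℂ) - (lam : ℂ) - ε * I‖ := by
        refine le_trans (hsupp μ h) ?_
        have : ((μ : ℂ) - (lam : ℂ) - ε * I).re = μ - lam := by simp
        calc |μ - lam| = |((μ : ℂ) - (lam : ℂ) - ε * I).re| := by rw [this]
        _ ≤ ‖(μ : ℂ) - (lam : ℂ) - ε * I‖ := Complex.abs_re_le_norm _
      rw [norm_div]
      exact div_le_div_of_nonneg_left (norm_nonneg _) hδ h1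
  · exact hg.norm.div_const δ
  · refine Eventually.of_forall fun μ => ?_
    rcases eq_or_ne (g μ) 0 with h | h
    · simp [h]
    · have hne : (μ : ℂ) - (lam : ℂ) ≠ 0 := by
        rw [sub_ne_zero]
        have : μ ≠ lam := by
          intro hh
          have := hsupp μ h
          rw [hh] at this
          simp at this
          linarith
        exact_mod_cast this
      have hden : Tendsto (fun ε : ℝ => (μ : ℂ) - (lam : ℂ) - ε * I) (𝓝[>] 0)
          (𝓝 ((μ : ℂ) - (lam : ℂ))) := by
        have : Continuous (fun ε : ℝ => (μ : ℂ) - (lam : ℂ) - ε * I) := by continuity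
        have h0 := this.tendsto 0
        simp at h0
        exact h0.mono_left nhdsWithin_le_nhds
      exact (tendsto_const_nhds.div hden hne)

lemma gen_tendsto (m : Measure ℝ) [IsFiniteMeasure m]
    (K : Set ℝ) (hK : IsCompact K) (hmK : m Kᶜ = 0)
    (v : ℝ → ℂ) (hv : MemLp v 2 m) (a1 lam : ℝ)
    (hlim : Tendsto
      (fun ε : ℝ => ∫ μ, (‖v μ‖ ^ 2 : ℂ) / ((μ : ℂ) - (lam : ℂ) - ε * I) ∂m)
      (𝓝[>] 0) (𝓝 ((a1 : ℂ) - (lam : ℂ)))) (n : ℕ) :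
    ∃ L : ℂ, Tendsto
      (fun ε : ℝ => ∫ μ, (‖v μ‖ ^ 2 : ℂ) * (μ : ℂ) ^ n / ((μ : ℂ) - (lam : ℂ) - ε * I) ∂m)
      (𝓝[>] 0) (𝓝 L) := by
  have hv2 : Integrable (fun μ => ‖v μ‖ ^ 2) m := hv.norm.integrable_sq
  have hv2c : Integrable (fun μ => (‖v μ‖ ^ 2 : ℂ)) m := by
    have h' : Integrable (fun μ => ((‖v μ‖ ^ 2 : ℝ) : ℂ)) m := hv2.ofReal
    simpa [Complex.ofReal_pow] using h'
  -- a.e. bound on μ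
  obtain ⟨R, hR0, hR⟩ : ∃ R : ℝ, 0 ≤ R ∧ ∀ x ∈ K, |x| ≤ R := by
    obtain ⟨R, hR⟩ := hK.isBounded.subset_closedBall 0
    exact ⟨max R 0, le_max_right _ _, fun x hx =>
      le_trans (by simpa [Real.dist_eq] using hR hx) (le_max_left _ _)⟩
  have haeK : ∀ᵐ μ ∂m, μ ∈ K := by
    rw [MeasureTheory.ae_iff]
    exact hmK
  have hmom : ∀ i : ℕ, Integrable (fun μ => (‖v μ‖ ^ 2 : ℂ) * (μ : ℂ) ^ i) m := by
    intro i
    refine Integrable.mono' (hv2.const_mul (R ^ i)) ?_ ?_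
    · exact hv2c.aestronglyMeasurable.mul
        (Complex.measurable_ofReal.pow_const i).aestronglyMeasurable
    · filter_upwards [haeK] with μ hμ
      have : ‖(‖v μ‖ ^ 2 : ℂ) * (μ : ℂ) ^ i‖ = ‖v μ‖ ^ 2 * |μ| ^ i := by
        simp [_root_.abs_of_nonneg (sq_nonneg ‖v μ‖), Complex.norm_real]
      rw [this, mul_comm (R ^ i)]
      exact mul_le_mul_of_nonneg_left (pow_le_pow_left₀ (abs_nonneg μ) (hR μ hμ) i)
        (sq_nonneg _)
  have hdiv : ∀ ε : ℝ, 0 < ε →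
      Integrable (fun μ => (‖v μ‖ ^ 2 : ℂ) / ((μ : ℂ) - (lam : ℂ) - ε * I)) m := by
    intro ε hε
    have : (fun μ : ℝ => (‖v μ‖ ^ 2 : ℂ) / ((μ : ℂ) - (lam : ℂ) - ε * I))
        = fun μ : ℝ => ((μ : ℂ) - (lam : ℂ) - ε * I)⁻¹ * (‖v μ‖ ^ 2 : ℂ) := by
      funext μ; rw [div_eq_mul_inv, mul_comm]
    rw [this]
    refine hv2c.bdd_mul (c := ε⁻¹) ?_ (Eventually.of_forall fun μ => ?_)
    · exact (((Complex.measurable_ofReal.sub measurable_const).sub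
        measurable_const).inv).aestronglyMeasurable
    · rw [norm_inv]
      refine inv_anti₀ hε ?_
      have : ((μ : ℂ) - (lam : ℂ) - ε * I).im = -ε := by simp
      calc ε = |((μ : ℂ) - (lam : ℂ) - ε * I).im| := by rw [this, abs_neg, abs_of_pos hε]
      _ ≤ ‖(μ : ℂ) - (lam : ℂ) - ε * I‖ := Complex.abs_im_le_norm _
  set M : ℕ → ℂ := fun i => ∫ μ, (‖v μ‖ ^ 2 : ℂ) * (μ : ℂ) ^ i ∂m with hM
  set G : ℝ → ℂ := fun ε => ∫ μ, (‖v μ‖ ^ 2 : ℂ) / ((μ : ℂ) - (lam : ℂ) - ε * I) ∂m with hG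
  refine ⟨∑ i ∈ Finset.range n, (lam : ℂ) ^ (n - 1 - i) * M i
    + (lam : ℂ) ^ n * ((a1 : ℂ) - (lam : ℂ)), ?_⟩
  have hz : Tendsto (fun ε : ℝ => (lam : ℂ) + ε * I) (𝓝[>] 0) (𝓝 (lam : ℂ)) := by
    have : Continuous (fun ε : ℝ => (lam : ℂ) + ε * I) := by continuity
    have h0 := this.tendsto 0
    simp at h0
    exact h0.mono_left nhdsWithin_le_nhds
  have hlimF : Tendsto (fun ε : ℝ => ∑ i ∈ Finset.range n,
      ((lam : ℂ) + ε * I) ^ (n - 1 - i) * M i + ((lam : ℂ) + ε * I) ^ n * G ε) (𝓝[>] 0)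
      (𝓝 (∑ i ∈ Finset.range n, (lam : ℂ) ^ (n - 1 - i) * M i
        + (lam : ℂ) ^ n * ((a1 : ℂ) - (lam : ℂ)))) := by
    refine Tendsto.add ?_ ((hz.pow n).mul hlim)
    exact tendsto_finset_sum _ fun i _ => (hz.pow _).mul tendsto_const_nhds
  refine hlimF.congr' ?_
  filter_upwards [self_mem_nhdsWithin] with ε (hε : 0 < ε)
  have hd0 : ∀ μ : ℝ, (μ : ℂ) - ((lam : ℂ) + ε * I) ≠ 0 := by
    intro μ h
    have : ((μ : ℂ) - ((lam : ℂ) + ε * I)).im = -ε := by simp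
    rw [h] at this
    simp at this
    linarith
  have hident : ∀ μ : ℝ, (‖v μ‖ ^ 2 : ℂ) * (μ : ℂ) ^ n / ((μ : ℂ) - (lam : ℂ) - ε * I)
      = (∑ i ∈ Finset.range n, ((lam : ℂ) + ε * I) ^ (n - 1 - i)
          * ((‖v μ‖ ^ 2 : ℂ) * (μ : ℂ) ^ i))
        + ((lam : ℂ) + ε * I) ^ n
          * ((‖v μ‖ ^ 2 : ℂ) / ((μ : ℂ) - (lam : ℂ) - ε * I)) := by
    intro μ
    set z : ℂ := (lam : ℂ) + ε * I with hzdef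
    have hd : (μ : ℂ) - (lam : ℂ) - ε * I = (μ : ℂ) - z := by rw [hzdef]; ring
    rw [hd]
    have hpow : (μ : ℂ) ^ n
        = (∑ i ∈ Finset.range n, (μ : ℂ) ^ i * z ^ (n - 1 - i)) * ((μ : ℂ) - z) + z ^ n := by
      rw [geom_sum₂_mul]; ring
    rw [hpow]
    have key : ∀ (c A d zn : ℂ), d ≠ 0 → c * (A * d + zn) / d = c * A + zn * (c / d) := by
      intro c A d zn hd
      field_simp
    rw [key _ _ _ _ (hd0 μ), Finset.mul_sum]
    congr 1
    refine Finset.sum_congr rfl fun i _ => by ring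
  have : ∫ μ, (‖v μ‖ ^ 2 : ℂ) * (μ : ℂ) ^ n / ((μ : ℂ) - (lam : ℂ) - ε * I) ∂m
      = ∑ i ∈ Finset.range n, ((lam : ℂ) + ε * I) ^ (n - 1 - i) * M i
        + ((lam : ℂ) + ε * I) ^ n * G ε := by
    rw [show (fun μ : ℝ => (‖v μ‖ ^ 2 : ℂ) * (μ : ℂ) ^ n / ((μ : ℂ) - (lam : ℂ) - ε * I))
      = fun μ : ℝ => (∑ i ∈ Finset.range n, ((lam : ℂ) + ε * I) ^ (n - 1 - i)
          * ((‖v μ‖ ^ 2 : ℂ) * (μ : ℂ) ^ i))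
        + ((lam : ℂ) + ε * I) ^ n
          * ((‖v μ‖ ^ 2 : ℂ) / ((μ : ℂ) - (lam : ℂ) - ε * I)) from funext hident]
    rw [integral_add (integrable_finset_sum _ fun i _ => (hmom i).const_mul _)
      ((hdiv ε hε).const_mul _), integral_finset_sum _ fun i _ => (hmom i).const_mul _]
    simp only [integral_const_mul]
    rfl
  rw [this]


lemma wfamily (m : Measure ℝ) [IsFiniteMeasure m] (v : ℝ → ℂ) (hv : MemLp v 2 m) (lam : ℝ)
    (hbval : ∀ (δ : ℝ), 0 < δ → ∀ (g : ℝ → ℂ), Integrable g m →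
      (∀ μ, g μ ≠ 0 → δ ≤ |μ - lam|) →
      Tendsto (fun ε : ℝ => ∫ μ, g μ / ((μ : ℂ) - (lam : ℂ) - ε * I) ∂m) (𝓝[>] 0)
        (𝓝 (∫ μ, g μ / ((μ : ℂ) - (lam : ℂ)) ∂m)))
    (hinf : ¬ Integrable (fun μ : ℝ => ‖v μ‖ ^ 2 / |μ - lam| ^ 2) m) (M : ℝ) :
    ∃ (φ : Lp ℂ 2 m) (N : ℝ), 0 ≤ N ∧ M < N ∧ ‖φ‖ ^ 2 = N ∧
      Tendsto (fun ε : ℝ => ∫ μ, (starRingEnd ℂ) (v μ) * φ μ / ((μ : ℂ) - (lam : ℂ) - ε * I) ∂m)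
        (𝓝[>] 0) (𝓝 ((N : ℝ) : ℂ)) := by
  have hv2 : Integrable (fun μ => ‖v μ‖ ^ 2) m := hv.norm.integrable_sq
  set s : ℝ → Set ℝ := fun δ => {μ | δ ≤ |μ - lam|} with hs_def
  have hs : ∀ δ, MeasurableSet (s δ) := by
    intro δ
    have hm : Measurable fun μ : ℝ => |μ - lam| := by
      simpa [Real.norm_eq_abs] using (measurable_id.sub_const lam).norm
    exact measurableSet_le measurable_const hm
  set w : ℝ → ℝ → ℂ := fun δ μ => Set.indicator (s δ)
    (fun μ => v μ / ((μ : ℂ) - (lam : ℂ))) μ with hw_def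
  -- norm bound for denominators
  have habs : ∀ μ : ℝ, |μ - lam| ≤ ‖(μ : ℂ) - (lam : ℂ)‖ := by
    intro μ
    have : ((μ : ℂ) - (lam : ℂ)).re = μ - lam := by simp
    calc |μ - lam| = |((μ : ℂ) - (lam : ℂ)).re| := by rw [this]
    _ ≤ ‖(μ : ℂ) - (lam : ℂ)‖ := Complex.abs_re_le_norm _
  have hwbd : ∀ δ, 0 < δ → ∀ μ, ‖w δ μ‖ ≤ δ⁻¹ * ‖v μ‖ := by
    intro δ hδ μ
    by_cases hμ : μ ∈ s δ
    · rw [hw_def]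
      simp only [Set.indicator_of_mem hμ]
      rw [norm_div]
      rw [div_eq_inv_mul]
      refine mul_le_mul_of_nonneg_right ?_ (norm_nonneg _)
      refine inv_anti₀ hδ (le_trans hμ (habs μ))
    · rw [hw_def]
      simp only [Set.indicator_of_notMem hμ, norm_zero]
      positivity
  have hwaesm : ∀ δ, AEStronglyMeasurable (w δ) m := by
    intro δ
    refine AEStronglyMeasurable.indicator ?_ (hs δ)
    exact (hv.aestronglyMeasurable.aemeasurable.div
      ((Complex.measurable_ofReal.sub measurable_const)).aemeasurable).aestronglyMeasurable
  have hwm : ∀ δ, 0 < δ → MemLp (w δ) 2 m := by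
    intro δ hδ
    refine MemLp.of_le (hv.norm.const_mul δ⁻¹) (hwaesm δ) ?_
    refine Eventually.of_forall fun μ => ?_
    refine le_trans (hwbd δ hδ μ) ?_
    rw [Real.norm_eq_abs, abs_mul, abs_inv]
    rw [_root_.abs_of_pos hδ, _root_.abs_of_nonneg (norm_nonneg _)]
  -- pointwise norm-square identity on s δ
  have hwn : ∀ δ μ, μ ∈ s δ → ‖w δ μ‖ ^ 2 = ‖v μ‖ ^ 2 / |μ - lam| ^ 2 := by
    intro δ μ hμ
    rw [hw_def]
    simp only [Set.indicator_of_mem hμ]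
    rw [norm_div, div_pow]
    congr 1
    rw [show ((μ : ℂ) - (lam : ℂ)) = ((μ - lam : ℝ) : ℂ) by push_cast; ring]
    rw [Complex.norm_real, Real.norm_eq_abs]
  set N : ℝ → ℝ := fun δ => ∫ μ, ‖w δ μ‖ ^ 2 ∂m with hN_def
  have hwsqint : ∀ δ, 0 < δ → Integrable (fun μ => ‖w δ μ‖ ^ 2) m :=
    fun δ hδ => ((hwm δ hδ).norm.integrable_sq)
  have hN0 : ∀ δ, 0 ≤ N δ := fun δ => integral_nonneg fun μ => sq_nonneg _
  -- unboundedness of N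
  have hNub : ∀ M' : ℝ, ∃ δ : ℝ, 0 < δ ∧ M' < N δ := by
    by_contra h
    push_neg at h
    obtain ⟨M', hM'⟩ := h
    apply hinf
    have haem : AEMeasurable (fun μ : ℝ => ‖v μ‖ ^ 2 / |μ - lam| ^ 2) m := by
      refine AEMeasurable.div ((hv.aestronglyMeasurable.norm.aemeasurable).pow_const 2) ?_
      have hm : Measurable fun μ : ℝ => |μ - lam| := by
        simpa [Real.norm_eq_abs] using (measurable_id.sub_const lam).norm
      exact (hm.pow_const 2).aemeasurable
    refine ⟨haem.aestronglyMeasurable, ?_⟩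
    rw [hasFiniteIntegral_iff_ofReal (Eventually.of_forall fun μ => by positivity)]
    set g : ℝ → ENNReal := fun μ => ENNReal.ofReal (‖v μ‖ ^ 2 / |μ - lam| ^ 2) with hg_def
    set f : ℕ → ℝ → ENNReal := fun n μ => Set.indicator (s (1 / (n + 1 : ℝ))) g μ with hf_def
    have hδn : ∀ n : ℕ, (0 : ℝ) < 1 / (n + 1 : ℝ) := by
      intro n; positivity
    have hsub : ∀ a b : ℕ, a ≤ b → s (1 / (a + 1 : ℝ)) ⊆ s (1 / (b + 1 : ℝ)) := by
      intro a b hab μ hμ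
      have hμ' : (1 : ℝ) / (a + 1) ≤ |μ - lam| := hμ
      show (1 : ℝ) / (b + 1) ≤ |μ - lam|
      refine le_trans ?_ hμ'
      refine one_div_le_one_div_of_le (by positivity) ?_
      exact add_le_add_left (Nat.cast_le.mpr hab) 1
    have hmono : ∀ μ, Monotone fun n => f n μ := by
      intro μ a b hab
      exact Set.indicator_le_indicator_of_subset (hsub a b hab) (fun _ => zero_le) μ
    have hsup : (fun μ => ⨆ n, f n μ) = g := by
      funext μ
      by_cases hμ : μ = lam
      · have hg0 : g μ = 0 := by
          rw [hg_def]
          simp [hμ]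
        rw [hg0]
        refine le_antisymm (iSup_le fun n => ?_) zero_le
        have : μ ∉ s (1 / (n + 1 : ℝ)) := by
          intro hc
          have hc' : (1 : ℝ) / (n + 1) ≤ |μ - lam| := hc
          rw [hμ] at hc'
          simp at hc'
          have := hδn n
          linarith
        rw [hf_def]
        simp only [Set.indicator_of_notMem this]
        exact le_of_eq rfl
      · have hr : 0 < |μ - lam| := abs_pos.mpr (sub_ne_zero.mpr hμ)
        obtain ⟨n, hn⟩ := exists_nat_one_div_lt hr
        refine le_antisymm (iSup_le fun k => Set.indicator_le_self _ _ μ) ?_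
        refine le_iSup_of_le n ?_
        have hμs : μ ∈ s (1 / (n + 1 : ℝ)) := by
          show (1 : ℝ) / (n + 1) ≤ |μ - lam|
          exact le_of_lt (by exact_mod_cast hn)
        rw [hf_def]
        simp only [Set.indicator_of_mem hμs]
        exact le_rfl
    have hfg : ∀ n, f n = fun μ => ENNReal.ofReal (‖w (1 / (n + 1 : ℝ)) μ‖ ^ 2) := by
      intro n
      funext μ
      by_cases hμ : μ ∈ s (1 / (n + 1 : ℝ))
      · rw [hf_def]
        simp only [Set.indicator_of_mem hμ]
        rw [hg_def, hwn _ μ hμ]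
      · rw [hf_def]
        simp only [Set.indicator_of_notMem hμ]
        rw [hw_def]
        simp only [Set.indicator_of_notMem hμ]
        simp
    have hkey : ∀ n : ℕ, ∫⁻ μ, f n μ ∂m ≤ ENNReal.ofReal M' := by
      intro n
      rw [hfg n]
      rw [← ofReal_integral_eq_lintegral_ofReal (hwsqint _ (hδn n))
        (Eventually.of_forall fun μ => sq_nonneg _)]
      exact ENNReal.ofReal_le_ofReal (hM' _ (hδn n))
    have : ∫⁻ μ, g μ ∂m = ⨆ n, ∫⁻ μ, f n μ ∂m := by
      rw [← hsup]
      refine lintegral_iSup' (fun n => ?_) (Eventually.of_forall hmono)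
      exact (AEMeasurable.indicator (by
        exact (haem.ennreal_ofReal)) (hs _))
    rw [this]
    exact lt_of_le_of_lt (iSup_le hkey) ENNReal.ofReal_lt_top
  -- boundary value
  have hbv : ∀ δ, 0 < δ → Tendsto
      (fun ε : ℝ => ∫ μ, (starRingEnd ℂ) (v μ) * w δ μ / ((μ : ℂ) - (lam : ℂ) - ε * I) ∂m)
      (𝓝[>] 0) (𝓝 ((N δ : ℝ) : ℂ)) := by
    intro δ hδ
    have hgint : Integrable (fun μ => (starRingEnd ℂ) (v μ) * w δ μ) m := by
      refine Integrable.mono' (hv2.const_mul δ⁻¹) ?_ ?_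
      · exact ((RCLike.continuous_conj.comp_aestronglyMeasurable hv.aestronglyMeasurable).mul
          (hwaesm δ))
      · refine Eventually.of_forall fun μ => ?_
        rw [norm_mul, RCLike.norm_conj]
        calc ‖v μ‖ * ‖w δ μ‖ ≤ ‖v μ‖ * (δ⁻¹ * ‖v μ‖) :=
          mul_le_mul_of_nonneg_left (hwbd δ hδ μ) (norm_nonneg _)
        _ = δ⁻¹ * ‖v μ‖ ^ 2 := by ring
    have hsupp : ∀ μ, (starRingEnd ℂ) (v μ) * w δ μ ≠ 0 → δ ≤ |μ - lam| := by
      intro μ h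
      by_contra hc
      have : μ ∉ s δ := hc
      rw [hw_def] at h
      simp only [Set.indicator_of_notMem this, mul_zero] at h
      exact h rfl
    have hident : ∀ μ : ℝ, (starRingEnd ℂ) (v μ) * w δ μ / ((μ : ℂ) - (lam : ℂ))
        = ((‖w δ μ‖ ^ 2 : ℝ) : ℂ) := by
      intro μ
      by_cases hμ : μ ∈ s δ
      · have hμne : μ ≠ lam := by
          intro h
          have := hμ
          rw [hs_def] at this
          simp [h] at this
          linarith
        have hne : (μ : ℂ) - (lam : ℂ) ≠ 0 := sub_ne_zero.mpr (by exact_mod_cast hμne)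
        rw [hw_def]
        simp only [Set.indicator_of_mem hμ]
        have : (starRingEnd ℂ) (v μ) * (v μ / ((μ : ℂ) - (lam : ℂ))) / ((μ : ℂ) - (lam : ℂ))
            = (v μ * (starRingEnd ℂ) (v μ)) / (((μ : ℂ) - (lam : ℂ)) ^ 2) := by
          field_simp
        rw [this, Complex.mul_conj]
        rw [norm_div, div_pow, Complex.ofReal_div, Complex.normSq_eq_norm_sq]
        have hc : ((μ : ℂ) - (lam : ℂ)) = ((μ - lam : ℝ) : ℂ) := by push_cast; ring
        rw [hc, Complex.norm_real, Real.norm_eq_abs]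
        congr 1
        exact_mod_cast (_root_.sq_abs (μ - lam)).symm
      · rw [hw_def]
        simp [Set.indicator_of_notMem hμ]
    have := hbval δ hδ _ hgint hsupp
    have hI : (∫ μ, (starRingEnd ℂ) (v μ) * w δ μ / ((μ : ℂ) - (lam : ℂ)) ∂m)
        = ((N δ : ℝ) : ℂ) := by
      rw [show (fun μ : ℝ => (starRingEnd ℂ) (v μ) * w δ μ / ((μ : ℂ) - (lam : ℂ)))
        = fun μ : ℝ => ((‖w δ μ‖ ^ 2 : ℝ) : ℂ) from funext hident]
      exact integral_ofReal
    rw [← hI]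
    exact this
  -- choose δ for M
  obtain ⟨δ, hδ, hMN⟩ := hNub M
  set φ : Lp ℂ 2 m := (hwm δ hδ).toLp (w δ) with hφ_def
  have hcoe : ⇑φ =ᵐ[m] w δ := MemLp.coeFn_toLp _
  -- norm identity
  have hnorm : ‖φ‖ ^ 2 = N δ := by
    have h1 : (inner ℂ φ φ : ℂ) = ((‖φ‖ : ℝ) : ℂ) ^ 2 := inner_self_eq_norm_sq_to_K φ
    have h2 : (inner ℂ φ φ : ℂ) = ∫ μ, (starRingEnd ℂ) (φ μ) * φ μ ∂m := by
      rw [MeasureTheory.L2.inner_def]; congr 1; funext μ; rw [RCLike.inner_apply, mul_comm]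
    have h3 : (∫ μ, (starRingEnd ℂ) (φ μ) * φ μ ∂m) = ((N δ : ℝ) : ℂ) := by
      rw [hN_def]
      rw [show ((∫ μ, ‖w δ μ‖ ^ 2 ∂m : ℝ) : ℂ) = ∫ μ, ((‖w δ μ‖ ^ 2 : ℝ) : ℂ) ∂m from
        (integral_ofReal).symm]
      refine integral_congr_ae ?_
      filter_upwards [hcoe] with μ hμ
      rw [hμ]
      rw [mul_comm, Complex.mul_conj, Complex.normSq_eq_norm_sq]
    have := h1.symm.trans (h2.trans h3)
    have : ((‖φ‖ ^ 2 : ℝ) : ℂ) = ((N δ : ℝ) : ℂ) := by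
      push_cast
      push_cast at this
      exact this
    exact_mod_cast this
  refine ⟨φ, N δ, hN0 δ, hMN, hnorm, ?_⟩
  refine (hbv δ hδ).congr' ?_
  filter_upwards [self_mem_nhdsWithin] with ε hε
  refine integral_congr_ae ?_
  filter_upwards [hcoe] with μ hμ
  rw [hμ]

/-- Under the hypotheses of Statement 14 (boundary value `a1 - λ` existing
finitely, `v` cyclic for multiplication by the independent variable), if in addition
`∫ |v(μ)|²/|μ - λ|² dm(μ) = ∞` (i.e. `λ ∈ S_sc`), then the strong solution `X_λ` of the
Riccati equation is a densely defined, unbounded, non-closable linear functional on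
`L²(ℝ,m)`. -/
theorem X_lambda_unbounded_densely_defined_nonclosable
    (m : Measure ℝ) [IsFiniteMeasure m]
    (K : Set ℝ) (hK : IsCompact K) (hmK : m Kᶜ = 0)
    (v : ℝ → ℂ) (hv : MemLp v 2 m) (a1 lam : ℝ)
    (hcyc : Dense ((Submodule.span ℂ
      {f : Lp ℂ 2 m | ∃ n : ℕ, ∀ᵐ μ ∂m, f μ = (μ : ℂ) ^ n * v μ} : Submodule ℂ (Lp ℂ 2 m))
        : Set (Lp ℂ 2 m)))
    (hlim : Tendsto
      (fun ε : ℝ => ∫ μ, (‖v μ‖ ^ 2 : ℂ) / ((μ : ℂ) - (lam : ℂ) - ε * I) ∂m)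
      (𝓝[>] 0) (𝓝 ((a1 : ℂ) - (lam : ℂ))))
    (hinf : ¬ Integrable (fun μ : ℝ => ‖v μ‖ ^ 2 / |μ - lam| ^ 2) m) :
    -- `X_λ` is densely defined, ...
    Dense {φ : Lp ℂ 2 m | ∃ L : ℂ, Tendsto
      (fun ε : ℝ => ∫ μ, (starRingEnd ℂ) (v μ) * φ μ / ((μ : ℂ) - (lam : ℂ) - ε * I) ∂m)
      (𝓝[>] 0) (𝓝 L)} ∧
    -- ... unbounded, ...
    (¬ ∃ C : ℝ, ∀ (φ : Lp ℂ 2 m) (L : ℂ),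
      Tendsto
        (fun ε : ℝ => ∫ μ, (starRingEnd ℂ) (v μ) * φ μ / ((μ : ℂ) - (lam : ℂ) - ε * I) ∂m)
        (𝓝[>] 0) (𝓝 L) →
      ‖L‖ ≤ C * ‖φ‖) ∧
    -- ... and non-closable:
    ∃ (u : ℕ → Lp ℂ 2 m) (L : ℕ → ℂ) (c : ℂ), c ≠ 0 ∧
      (∀ n, Tendsto
        (fun ε : ℝ => ∫ μ, (starRingEnd ℂ) (v μ) * (u n) μ / ((μ : ℂ) - (lam : ℂ) - ε * I) ∂m)
        (𝓝[>] 0) (𝓝 (L n))) ∧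
      Tendsto u atTop (𝓝 0) ∧ Tendsto L atTop (𝓝 c) := by
  have hbval := fun δ hδ g hg hsupp => bval m lam δ hδ g hg hsupp
  -- integrability of the pairings
  have hinner : ∀ φ : Lp ℂ 2 m, Integrable (fun μ => (starRingEnd ℂ) (v μ) * φ μ) m := by
    intro φ
    have h := MeasureTheory.L2.integrable_inner (𝕜 := ℂ) (hv.toLp v) φ
    refine h.congr ?_
    filter_upwards [MemLp.coeFn_toLp hv] with μ hμ
    rw [RCLike.inner_apply, hμ, mul_comm]
  have hdivint : ∀ (φ : Lp ℂ 2 m) (ε : ℝ), 0 < ε →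
      Integrable (fun μ => (starRingEnd ℂ) (v μ) * φ μ / ((μ : ℂ) - (lam : ℂ) - ε * I)) m := by
    intro φ ε hε
    have : (fun μ : ℝ => (starRingEnd ℂ) (v μ) * φ μ / ((μ : ℂ) - (lam : ℂ) - ε * I))
        = fun μ : ℝ => ((μ : ℂ) - (lam : ℂ) - ε * I)⁻¹ * ((starRingEnd ℂ) (v μ) * φ μ) := by
      funext μ; rw [div_eq_mul_inv, mul_comm]
    rw [this]
    refine (hinner φ).bdd_mul (c := ε⁻¹) ?_ (Eventually.of_forall fun μ => ?_)
    · exact (((Complex.measurable_ofReal.sub measurable_const).sub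
        measurable_const).inv).aestronglyMeasurable
    · rw [norm_inv]
      refine inv_anti₀ hε ?_
      have him : ((μ : ℂ) - (lam : ℂ) - ε * I).im = -ε := by simp
      calc ε = |((μ : ℂ) - (lam : ℂ) - ε * I).im| := by rw [him, abs_neg, abs_of_pos hε]
      _ ≤ ‖(μ : ℂ) - (lam : ℂ) - ε * I‖ := Complex.abs_im_le_norm _
  constructor
  · -- densely defined
    refine hcyc.mono ?_
    intro φ hφ
    refine Submodule.span_induction ?_ ?_ ?_ ?_ hφ
    · -- generators
      rintro f ⟨n, hf⟩
      obtain ⟨L, hT⟩ := gen_tendsto m K hK hmK v hv a1 lam hlim n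
      refine ⟨L, hT.congr' ?_⟩
      filter_upwards [self_mem_nhdsWithin] with ε (hε : 0 < ε)
      refine integral_congr_ae ?_
      filter_upwards [hf] with μ hμ
      rw [hμ]
      congr 1
      rw [show (starRingEnd ℂ) (v μ) * ((μ : ℂ) ^ n * v μ)
        = (μ : ℂ) ^ n * (v μ * (starRingEnd ℂ) (v μ)) by ring]
      rw [Complex.mul_conj, Complex.normSq_eq_norm_sq]
      push_cast
      ring
    · -- zero
      refine ⟨0, ?_⟩
      have : ∀ ε : ℝ, (∫ μ, (starRingEnd ℂ) (v μ) * (0 : Lp ℂ 2 m) μ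
          / ((μ : ℂ) - (lam : ℂ) - ε * I) ∂m) = 0 := by
        intro ε
        rw [show (0 : ℂ) = ∫ (_ : ℝ), (0 : ℂ) ∂m by rw [integral_zero]]
        refine integral_congr_ae ?_
        filter_upwards [Lp.coeFn_zero ℂ 2 m] with μ hμ
        rw [hμ]
        simp
      refine tendsto_const_nhds.congr fun ε => (this ε).symm
    · -- add
      rintro x y hx hy ⟨Lx, hTx⟩ ⟨Ly, hTy⟩
      refine ⟨Lx + Ly, (hTx.add hTy).congr' ?_⟩
      filter_upwards [self_mem_nhdsWithin] with ε (hε : 0 < ε)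
      rw [← integral_add (hdivint x ε hε) (hdivint y ε hε)]
      refine integral_congr_ae ?_
      filter_upwards [Lp.coeFn_add x y] with μ hμ
      rw [hμ]
      simp only [Pi.add_apply]
      ring
    · -- smul
      rintro a x hx ⟨L, hT⟩
      refine ⟨a * L, (hT.const_mul a).congr' ?_⟩
      filter_upwards [self_mem_nhdsWithin] with ε (hε : 0 < ε)
      rw [← integral_const_mul]
      refine integral_congr_ae ?_
      filter_upwards [Lp.coeFn_smul a x] with μ hμ
      rw [hμ]
      simp only [Pi.smul_apply, smul_eq_mul]
      ring
  constructor
  · -- unbounded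
    rintro ⟨C, hC⟩
    set B : ℝ := max C 0 with hB_def
    obtain ⟨φ, N, hN0, hMN, hnorm, hT⟩ := wfamily m v hv lam hbval hinf (B ^ 2)
    have hL := hC φ ((N : ℝ) : ℂ) hT
    have hNnorm : ‖((N : ℝ) : ℂ)‖ = N := by
      rw [Complex.norm_real, Real.norm_eq_abs, _root_.abs_of_nonneg hN0]
    have hφn : ‖φ‖ = Real.sqrt N := by
      rw [← hnorm, Real.sqrt_sq (norm_nonneg φ)]
    rw [hNnorm, hφn] at hL
    have hNpos : 0 < N := lt_of_le_of_lt (by positivity) hMN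
    have hsq : B < Real.sqrt N := by
      rw [show B = Real.sqrt (B ^ 2) by rw [Real.sqrt_sq (le_max_right C 0)]]
      exact Real.sqrt_lt_sqrt (by positivity) hMN
    have h1 : C * Real.sqrt N ≤ B * Real.sqrt N :=
      mul_le_mul_of_nonneg_right (le_max_left C 0) (Real.sqrt_nonneg N)
    have h2 : B * Real.sqrt N < Real.sqrt N * Real.sqrt N :=
      mul_lt_mul_of_pos_right hsq (Real.sqrt_pos.mpr hNpos)
    rw [Real.mul_self_sqrt hN0] at h2
    linarith
  · -- non-closable
    have H : ∀ n : ℕ, ∃ (φ : Lp ℂ 2 m) (N : ℝ), 0 ≤ N ∧ ((n : ℝ) + 1) < N ∧ ‖φ‖ ^ 2 = N ∧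
        Tendsto (fun ε : ℝ => ∫ μ, (starRingEnd ℂ) (v μ) * φ μ
          / ((μ : ℂ) - (lam : ℂ) - ε * I) ∂m) (𝓝[>] 0) (𝓝 ((N : ℝ) : ℂ)) :=
      fun n => wfamily m v hv lam hbval hinf ((n : ℝ) + 1)
    choose φ N hN0 hMN hnorm hT using H
    have hNpos : ∀ n, 0 < N n := fun n => lt_of_le_of_lt (by positivity) (hMN n)
    have hNne : ∀ n, ((N n : ℝ) : ℂ) ≠ 0 := fun n => Complex.ofReal_ne_zero.mpr (hNpos n).ne'
    refine ⟨fun n => (((N n : ℝ) : ℂ))⁻¹ • φ n, fun _ => 1, 1, one_ne_zero, ?_, ?_,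
      tendsto_const_nhds⟩
    · intro n
      have base := (hT n).const_mul ((((N n : ℝ)) : ℂ))⁻¹
      rw [inv_mul_cancel₀ (hNne n)] at base
      refine base.congr' ?_
      filter_upwards [self_mem_nhdsWithin] with ε (hε : 0 < ε)
      rw [← integral_const_mul]
      refine integral_congr_ae ?_
      filter_upwards [Lp.coeFn_smul ((((N n : ℝ)) : ℂ))⁻¹ (φ n)] with μ hμ
      rw [hμ]
      simp only [Pi.smul_apply, smul_eq_mul]
      ring
    · rw [tendsto_zero_iff_norm_tendsto_zero]
      have hbd : ∀ n : ℕ, ‖(((N n : ℝ) : ℂ))⁻¹ • φ n‖ ≤ Real.sqrt (1 / ((n : ℝ) + 1)) := by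
        intro n
        rw [norm_smul, norm_inv, Complex.norm_real, Real.norm_eq_abs,
          abs_of_pos (hNpos n)]
        have hφn : ‖φ n‖ = Real.sqrt (N n) := by
          rw [← hnorm n, Real.sqrt_sq (norm_nonneg (φ n))]
        rw [hφn]
        have h1 : (N n)⁻¹ * Real.sqrt (N n) = Real.sqrt ((N n)⁻¹) := by
          rw [Real.sqrt_inv]
          rw [show N n = Real.sqrt (N n) * Real.sqrt (N n) from
            (Real.mul_self_sqrt (hN0 n)).symm]
          have := Real.sqrt_pos.mpr (hNpos n)
          field_simp
          rw [Real.sqrt_sq this.le]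
        rw [h1]
        rw [show (1 : ℝ) / ((n : ℝ) + 1) = ((n : ℝ) + 1)⁻¹ by rw [one_div]]
        refine Real.sqrt_le_sqrt ?_
        refine inv_anti₀ (by positivity) (hMN n).le
      refine squeeze_zero (fun n => norm_nonneg _) hbd ?_
      have h0 : Tendsto (fun n : ℕ => 1 / ((n : ℝ) + 1)) atTop (𝓝 0) :=
        tendsto_one_div_add_atTop_nhds_zero_nat
      have hc : Tendsto Real.sqrt (𝓝 0) (𝓝 0) := by
        have := Real.continuous_sqrt.tendsto 0
        simpa using this
      exact hc.comp h0
end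

section
/- Let m be a finite Borel measure on ℝ, v ∈ L²(ℝ,m), and λ1 ≠ λ2 real numbers such that both functionals X_{λ1} and X_{λ2} (boundary values of the Cauchy transform against \overline{v}) are densely defined. If v ≠ 0 in L²(ℝ,m), then X_{λ1} ≠ X_{λ2}; consequently the map λ ↦ G(H0, X_λ) from such λ to subspaces of L²(ℝ,m) ⊕ ℂ is injective. -/
open MeasureTheory Filter Topology Complex

noncomputable def Xchi (a b : ℝ) : ℝ → ℂ := ({a, b}ᶜ : Set ℝ).indicator (fun _ => 1)

lemma Xchi_eq_zero {a b μ : ℝ} (h : μ = a ∨ μ = b) : Xchi a b μ = 0 :=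
  Set.indicator_of_notMem (by simp [Set.mem_insert_iff]; tauto) _

lemma Xchi_eq_one {a b μ : ℝ} (h : ¬ (μ = a ∨ μ = b)) : Xchi a b μ = 1 :=
  Set.indicator_of_mem (by simp [Set.mem_insert_iff]; tauto) _

lemma Xchi_comm (a b : ℝ) : Xchi a b = Xchi b a := by
  unfold Xchi; rw [Set.pair_comm]

lemma Xchi_measurable (a b : ℝ) : Measurable (Xchi a b) :=
  measurable_const.indicator ((MeasurableSet.insert (measurableSet_singleton b) a).compl)

noncomputable def Xphi (v : ℝ → ℂ) (a b : ℝ) : ℝ → ℂ := fun μ =>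
  v μ * ((μ:ℂ) - a) * ((μ:ℂ) - b) * Xchi a b μ / ((1 + μ^2 : ℝ) : ℂ)

lemma Xphi_comm (v : ℝ → ℂ) (a b : ℝ) : Xphi v a b = Xphi v b a := by
  funext μ; unfold Xphi; rw [Xchi_comm]; ring

lemma Xnorm_ofReal (x : ℝ) : ‖((x:ℝ):ℂ)‖ = |x| := by
  simp [Complex.norm_real]

lemma Xsub_cast (μ a : ℝ) : (μ:ℂ) - (a:ℂ) = ((μ - a : ℝ) : ℂ) := by push_cast; ring

lemma Xd_norm_ge (μ a ε : ℝ) : |μ - a| ≤ ‖(μ:ℂ) - (a:ℂ) - (ε:ℝ) * I‖ := by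
  have hre : ((μ:ℂ) - (a:ℂ) - (ε:ℝ) * I).re = μ - a := by simp
  calc |μ - a| = |((μ:ℂ) - (a:ℂ) - (ε:ℝ) * I).re| := by rw [hre]
    _ ≤ ‖(μ:ℂ) - (a:ℂ) - (ε:ℝ) * I‖ := Complex.abs_re_le_norm _
    _ = ‖(μ:ℂ) - (a:ℂ) - (ε:ℝ) * I‖ := rfl

lemma Xabs_le (μ b : ℝ) : |μ - b| ≤ (1 + |b|) * (1 + μ^2) := by
  have h1 : |μ - b| ≤ |μ| + |b| := abs_sub μ b
  have h2 : |μ| ≤ 1 + μ^2 := by nlinarith [_root_.sq_abs μ, abs_nonneg μ]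
  nlinarith [abs_nonneg b, sq_nonneg μ, mul_nonneg (abs_nonneg b) (sq_nonneg μ)]

lemma Xbound (v : ℝ → ℂ) (a b μ ε : ℝ) :
    ‖(starRingEnd ℂ) (v μ) * Xphi v a b μ / ((μ:ℂ) - (a:ℂ) - (ε:ℝ) * I)‖
      ≤ (1 + |b|) * ‖v μ‖^2 := by
  by_cases h : μ = a ∨ μ = b
  · simp [Xphi, Xchi_eq_zero h]
    positivity
  · have hw : (0:ℝ) < 1 + μ^2 := by positivity
    have e1 : ‖(starRingEnd ℂ) (v μ) * Xphi v a b μ / ((μ:ℂ) - (a:ℂ) - (ε:ℝ) * I)‖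
        = ‖v μ‖ * ‖v μ‖ * (|μ - a| / ‖(μ:ℂ) - (a:ℂ) - (ε:ℝ) * I‖) * (|μ - b| / (1 + μ^2)) := by
      rw [Xphi]
      rw [Xchi_eq_one h, mul_one]
      rw [norm_div, norm_mul, norm_div, norm_mul, norm_mul, RCLike.norm_conj,
        Xsub_cast μ a, Xsub_cast μ b, Xnorm_ofReal, Xnorm_ofReal, Xnorm_ofReal,
        abs_of_pos hw]
      ring
    rw [e1]
    calc ‖v μ‖ * ‖v μ‖ * (|μ - a| / ‖(μ:ℂ) - (a:ℂ) - (ε:ℝ) * I‖) * (|μ - b| / (1 + μ^2))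
        ≤ ‖v μ‖ * ‖v μ‖ * 1 * (1 + |b|) := by
          gcongr
          · exact div_le_one_of_le₀ (Xd_norm_ge μ a ε) (norm_nonneg _)
          · rw [div_le_iff₀ hw]; exact Xabs_le μ b
      _ = (1 + |b|) * ‖v μ‖^2 := by ring


lemma Xphi_aesm {m : Measure ℝ} {v : ℝ → ℂ} (hv : AEStronglyMeasurable v m) (a b : ℝ) :
    AEStronglyMeasurable (Xphi v a b) m := by
  have hcont : Continuous (fun μ : ℝ => ((μ:ℂ) - a) * ((μ:ℂ) - b) / ((1 + μ^2 : ℝ) : ℂ)) := by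
    refine Continuous.div (by continuity) (by continuity) (fun μ => ?_)
    exact_mod_cast Complex.ofReal_ne_zero.2 (by positivity)
  have heq : Xphi v a b = fun μ => v μ *
      ((((μ:ℂ) - a) * ((μ:ℂ) - b) / ((1 + μ^2 : ℝ) : ℂ)) * Xchi a b μ) := by
    funext μ; unfold Xphi; ring
  rw [heq]
  exact hv.mul ((hcont.measurable.mul (Xchi_measurable a b)).aestronglyMeasurable)

lemma Xconj_aesm {m : Measure ℝ} {v : ℝ → ℂ} (hv : AEStronglyMeasurable v m) :
    AEStronglyMeasurable (fun μ => (starRingEnd ℂ) (v μ)) m :=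
  continuous_star.comp_aestronglyMeasurable hv

lemma Xpoly_bound (a b μ : ℝ) : |μ - a| * |μ - b| ≤ (1 + |a|) * (1 + |b|) * (1 + μ^2) := by
  have ha : |μ - a| ≤ |μ| + |a| := abs_sub μ a
  have hb : |μ - b| ≤ |μ| + |b| := abs_sub μ b
  have h2 : |μ| ≤ 1 + μ^2 := by nlinarith [_root_.sq_abs μ, abs_nonneg μ]
  have h3 : |μ - a| * |μ - b| ≤ (|μ| + |a|) * (|μ| + |b|) :=
    mul_le_mul ha hb (abs_nonneg _) (by positivity)
  nlinarith [_root_.sq_abs μ, abs_nonneg a, abs_nonneg b, abs_nonneg μ, sq_nonneg μ,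
    mul_nonneg (abs_nonneg a) (abs_nonneg b), mul_nonneg (mul_nonneg (abs_nonneg a) (abs_nonneg b)) (sq_nonneg μ),
    mul_nonneg (abs_nonneg a) (sq_nonneg μ), mul_nonneg (abs_nonneg b) (sq_nonneg μ)]

lemma Xphi_memℒp {m : Measure ℝ} {v : ℝ → ℂ} (hv : MemLp v 2 m) (a b : ℝ) :
    MemLp (Xphi v a b) 2 m := by
  refine MemLp.of_le_mul hv (Xphi_aesm hv.aestronglyMeasurable a b)
    (Filter.Eventually.of_forall fun μ => ?_) (c := (1 + |a|) * (1 + |b|))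
  by_cases h : μ = a ∨ μ = b
  · simp [Xphi, Xchi_eq_zero h]
    positivity
  · have hw : (0:ℝ) < 1 + μ^2 := by positivity
    have e1 : ‖Xphi v a b μ‖ = ‖v μ‖ * ((|μ - a| * |μ - b|) / (1 + μ^2)) := by
      rw [Xphi, Xchi_eq_one h, mul_one, norm_div, norm_mul, norm_mul,
        Xsub_cast μ a, Xsub_cast μ b, Xnorm_ofReal, Xnorm_ofReal, Xnorm_ofReal, abs_of_pos hw]
      ring
    rw [e1]
    have h1 : (|μ - a| * |μ - b|) / (1 + μ^2) ≤ (1 + |a|) * (1 + |b|) := by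
      rw [div_le_iff₀ hw]; exact Xpoly_bound a b μ
    calc ‖v μ‖ * ((|μ - a| * |μ - b|) / (1 + μ^2))
        ≤ ‖v μ‖ * ((1 + |a|) * (1 + |b|)) := by gcongr
      _ = (1 + |a|) * (1 + |b|) * ‖v μ‖ := by ring

noncomputable def Xtarget (v : ℝ → ℂ) (a b : ℝ) : ℝ → ℂ := fun μ =>
  (starRingEnd ℂ) (v μ) * v μ * ((μ:ℂ) - b) * Xchi a b μ / ((1 + μ^2 : ℝ) : ℂ)

lemma Xtarget_bound (v : ℝ → ℂ) (a b μ : ℝ) :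
    ‖Xtarget v a b μ‖ ≤ (1 + |b|) * ‖v μ‖^2 := by
  by_cases h : μ = a ∨ μ = b
  · simp [Xtarget, Xchi_eq_zero h]
    positivity
  · have hw : (0:ℝ) < 1 + μ^2 := by positivity
    have e1 : ‖Xtarget v a b μ‖ = ‖v μ‖ * ‖v μ‖ * (|μ - b| / (1 + μ^2)) := by
      rw [Xtarget, Xchi_eq_one h, mul_one, norm_div, norm_mul, norm_mul, RCLike.norm_conj,
        Xsub_cast μ b, Xnorm_ofReal, Xnorm_ofReal, abs_of_pos hw]
      ring
    rw [e1]
    calc ‖v μ‖ * ‖v μ‖ * (|μ - b| / (1 + μ^2))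
        ≤ ‖v μ‖ * ‖v μ‖ * (1 + |b|) := by
          gcongr
          rw [div_le_iff₀ hw]; exact Xabs_le μ b
      _ = (1 + |b|) * ‖v μ‖^2 := by ring

lemma Xtarget_aesm {m : Measure ℝ} {v : ℝ → ℂ} (hv : AEStronglyMeasurable v m) (a b : ℝ) :
    AEStronglyMeasurable (Xtarget v a b) m := by
  have hcont : Continuous (fun μ : ℝ => ((μ:ℂ) - b) / ((1 + μ^2 : ℝ) : ℂ)) := by
    refine Continuous.div (by continuity) (by continuity) (fun μ => ?_)
    exact_mod_cast Complex.ofReal_ne_zero.2 (by positivity)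
  have heq : Xtarget v a b = fun μ => ((starRingEnd ℂ) (v μ) * v μ) *
      ((((μ:ℂ) - b) / ((1 + μ^2 : ℝ) : ℂ)) * Xchi a b μ) := by
    funext μ; unfold Xtarget; ring
  rw [heq]
  exact ((Xconj_aesm hv).mul hv).mul
    ((hcont.measurable.mul (Xchi_measurable a b)).aestronglyMeasurable)

lemma Xtarget_integrable {m : Measure ℝ} {v : ℝ → ℂ} (hv : MemLp v 2 m) (a b : ℝ) :
    Integrable (Xtarget v a b) m := by
  refine Integrable.mono' ((hv.norm.integrable_sq).const_mul (1 + |b|))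
    (Xtarget_aesm hv.aestronglyMeasurable a b)
    (Filter.Eventually.of_forall fun μ => ?_)
  simpa using Xtarget_bound v a b μ

lemma Xtendsto (m : Measure ℝ) (v : ℝ → ℂ) (hv : MemLp v 2 m) (a b : ℝ) :
    Tendsto (fun ε : ℝ => ∫ μ, (starRingEnd ℂ) (v μ) * Xphi v a b μ / ((μ:ℂ) - (a:ℂ) - (ε:ℝ) * I) ∂m)
      (𝓝[>] 0) (𝓝 (∫ μ, Xtarget v a b μ ∂m)) := by
  refine tendsto_integral_filter_of_dominated_convergence (fun μ => (1 + |b|) * ‖v μ‖^2)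
    (Filter.Eventually.of_forall fun ε => ?_)
    (Filter.Eventually.of_forall fun ε => Filter.Eventually.of_forall fun μ => Xbound v a b μ ε)
    ((hv.norm.integrable_sq).const_mul (1 + |b|))
    (Filter.Eventually.of_forall fun μ => ?_)
  · -- measurability
    have hker : Continuous (fun μ : ℝ => ((μ:ℂ) - (a:ℂ) - (ε:ℝ) * I)) := by continuity
    simp only [div_eq_mul_inv]
    exact ((Xconj_aesm hv.aestronglyMeasurable).mul (Xphi_aesm hv.aestronglyMeasurable a b)).mul
      (hker.measurable.inv.aestronglyMeasurable)
  · -- pointwise limit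
    by_cases h : μ = a ∨ μ = b
    · simpa [Xphi, Xtarget, Xchi_eq_zero h] using
        (tendsto_const_nhds : Tendsto (fun _ : ℝ => (0:ℂ)) (𝓝[>] 0) (𝓝 0))
    · have hμa : μ ≠ a := fun hc => h (Or.inl hc)
      have hA : (μ:ℂ) - (a:ℂ) ≠ 0 := sub_ne_zero.2 (by exact_mod_cast hμa)
      have hden : Tendsto (fun ε : ℝ => (μ:ℂ) - (a:ℂ) - (ε:ℝ) * I) (𝓝[>] 0) (𝓝 ((μ:ℂ) - a)) := by
        have hc : Continuous (fun ε : ℝ => (μ:ℂ) - (a:ℂ) - (ε:ℝ) * I) := by continuity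
        simpa using (hc.tendsto 0).mono_left (nhdsWithin_le_nhds (s := Set.Ioi (0:ℝ)))
      have hlim := Filter.Tendsto.div
        (tendsto_const_nhds : Tendsto (fun _ : ℝ => (starRingEnd ℂ) (v μ) * Xphi v a b μ) (𝓝[>] 0) _)
        hden hA
      have heqv : Xtarget v a b μ = (starRingEnd ℂ) (v μ) * Xphi v a b μ / ((μ:ℂ) - a) := by
        have hw : ((1 + μ^2 : ℝ) : ℂ) ≠ 0 := Complex.ofReal_ne_zero.2 (by positivity)
        have key : ∀ (c x A B w : ℂ), A ≠ 0 → w ≠ 0 →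
            c * x * B * 1 / w = c * (x * A * B * 1 / w) / A := by
          intros c x A B w hA hw; field_simp
        rw [Xtarget, Xphi, Xchi_eq_one h]
        exact key _ _ _ _ _ hA hw
      rw [heqv]
      exact hlim

lemma Xind_integral (m : Measure ℝ) (v : ℝ → ℂ) (a c : ℝ) (ε : ℝ) (φ : Lp ℂ 2 m)
    (hφ : ⇑φ =ᵐ[m] Set.indicator {a} (fun _ => (1:ℂ))) :
    ∫ μ, (starRingEnd ℂ) (v μ) * φ μ / ((μ:ℂ) - (c:ℂ) - (ε:ℝ) * I) ∂m
      = (m {a}).toReal • ((starRingEnd ℂ) (v a) / ((a:ℂ) - (c:ℂ) - (ε:ℝ) * I)) := by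
  have hcong : (fun μ => (starRingEnd ℂ) (v μ) * φ μ / ((μ:ℂ) - (c:ℂ) - (ε:ℝ) * I))
      =ᵐ[m] fun μ => Set.indicator ({a} : Set ℝ)
        (fun _ => (starRingEnd ℂ) (v a) / ((a:ℂ) - (c:ℂ) - (ε:ℝ) * I)) μ := by
    filter_upwards [hφ] with μ hμ
    rw [hμ]
    by_cases h : μ = a
    · subst h
      rw [Set.indicator_of_mem (Set.mem_singleton _), Set.indicator_of_mem (Set.mem_singleton _), mul_one]
    · rw [Set.indicator_of_notMem (by simpa using h), Set.indicator_of_notMem (by simpa using h), mul_zero, zero_div]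
  rw [integral_congr_ae hcong, integral_indicator_const _ (measurableSet_singleton a)]
  rfl

lemma Xdiverge (r : ℝ) (K : ℂ) (L : ℂ)
    (h : Tendsto (fun ε : ℝ => r • (K / ((0:ℂ) - (ε:ℝ) * I))) (𝓝[>] 0) (𝓝 L)) :
    r = 0 ∨ K = 0 := by
  by_contra hcon
  push_neg at hcon
  obtain ⟨hr, hK⟩ := hcon
  have hpos : 0 < |r| * ‖K‖ := mul_pos (abs_pos.2 hr) (norm_pos_iff.2 hK)
  have hnorm : (fun ε : ℝ => (|r| * ‖K‖) * ε⁻¹)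
      =ᶠ[𝓝[>] (0:ℝ)] fun ε : ℝ => ‖r • (K / ((0:ℂ) - (ε:ℝ) * I))‖ := by
    filter_upwards [self_mem_nhdsWithin] with ε hε
    have hε' : (0:ℝ) < ε := hε
    rw [norm_smul, norm_div, Real.norm_eq_abs, zero_sub, norm_neg, norm_mul,
      Complex.norm_I, Complex.norm_real, Real.norm_eq_abs, abs_of_pos hε']
    ring
  have hdiv : Tendsto (fun ε : ℝ => (|r| * ‖K‖) * ε⁻¹) (𝓝[>] (0:ℝ)) atTop :=
    Filter.Tendsto.const_mul_atTop hpos tendsto_inv_nhdsGT_zero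
  exact not_tendsto_nhds_of_tendsto_atTop (hdiv.congr' hnorm) ‖L‖ h.norm

lemma Xatom (m : Measure ℝ) [IsFiniteMeasure m] (v : ℝ → ℂ) (a b : ℝ) (hab : a ≠ b)
    (hsub2 : {p : Lp ℂ 2 m × ℂ | Tendsto
        (fun ε : ℝ => ∫ μ, (starRingEnd ℂ) (v μ) * p.1 μ / ((μ : ℂ) - (b : ℂ) - ε * I) ∂m)
        (𝓝[>] 0) (𝓝 p.2)} ⊆ {p : Lp ℂ 2 m × ℂ | Tendsto
        (fun ε : ℝ => ∫ μ, (starRingEnd ℂ) (v μ) * p.1 μ / ((μ : ℂ) - (a : ℂ) - ε * I) ∂m)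
        (𝓝[>] 0) (𝓝 p.2)}) : m {a} = 0 ∨ v a = 0 := by
  have hmemro := memLp_indicator_const (μ := m) 2 (measurableSet_singleton a) (1:ℂ)
    (Or.inr (measure_ne_top m _))
  set ψ : Lp ℂ 2 m := hmemro.toLp _ with hψdef
  have hψ : ⇑ψ =ᵐ[m] Set.indicator {a} (fun _ => (1:ℂ)) := MemLp.coeFn_toLp _
  have hden : Tendsto (fun ε : ℝ => (a:ℂ) - (b:ℂ) - (ε:ℝ) * I) (𝓝[>] 0) (𝓝 ((a:ℂ) - b)) := by
    have hc : Continuous (fun ε : ℝ => (a:ℂ) - (b:ℂ) - (ε:ℝ) * I) := by continuity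
    simpa using (hc.tendsto 0).mono_left (nhdsWithin_le_nhds (s := Set.Ioi (0:ℝ)))
  have habC : (a:ℂ) - (b:ℂ) ≠ 0 := sub_ne_zero.2 (by exact_mod_cast hab)
  have keyb : Tendsto
      (fun ε : ℝ => ∫ μ, (starRingEnd ℂ) (v μ) * ψ μ / ((μ:ℂ) - (b:ℂ) - ε * I) ∂m)
      (𝓝[>] 0) (𝓝 ((m {a}).toReal • ((starRingEnd ℂ) (v a) / ((a:ℂ) - b)))) := by
    have hbase := (Filter.Tendsto.div
      (tendsto_const_nhds (x := (starRingEnd ℂ) (v a))) hden habC).const_smul ((m {a}).toReal)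
    refine hbase.congr fun ε => ?_
    rw [Xind_integral m v a b ε ψ hψ]
    rfl
  have hmem2 : (ψ, (m {a}).toReal • ((starRingEnd ℂ) (v a) / ((a:ℂ) - b))) ∈
      {p : Lp ℂ 2 m × ℂ | Tendsto
        (fun ε : ℝ => ∫ μ, (starRingEnd ℂ) (v μ) * p.1 μ / ((μ : ℂ) - (a : ℂ) - ε * I) ∂m)
        (𝓝[>] 0) (𝓝 p.2)} := hsub2 keyb
  have hdivg : Tendsto
      (fun ε : ℝ => ((m {a}).toReal) • ((starRingEnd ℂ) (v a) / ((0:ℂ) - (ε:ℝ) * I)))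
      (𝓝[>] 0) (𝓝 ((m {a}).toReal • ((starRingEnd ℂ) (v a) / ((a:ℂ) - b)))) := by
    refine (hmem2 : Tendsto _ _ _).congr fun ε => ?_
    rw [Xind_integral m v a a ε ψ hψ, sub_self]
  rcases Xdiverge _ _ _ hdivg with h | h
  · left
    rcases (ENNReal.toReal_eq_zero_iff _).1 h with h' | h'
    · exact h'
    · exact absurd h' (measure_ne_top m _)
  · right; exact (map_eq_zero _).1 h

/-- If `λ1 ≠ λ2` and both boundary-value functionals `X_{λ1}`, `X_{λ2}` are
densely defined, and `v ≠ 0` in `L²(ℝ,m)`, then `X_{λ1} ≠ X_{λ2}` (as operators, i.e. as graphs);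
consequently `λ ↦ G(H0, X_λ)` is injective. -/
theorem X_lambda_injective
    (m : Measure ℝ) [IsFiniteMeasure m]
    (v : ℝ → ℂ) (hv : MemLp v 2 m) (lam1 lam2 : ℝ) (hne : lam1 ≠ lam2)
    (hdense1 : Dense {φ : Lp ℂ 2 m | ∃ L : ℂ, Tendsto
      (fun ε : ℝ => ∫ μ, (starRingEnd ℂ) (v μ) * φ μ / ((μ : ℂ) - (lam1 : ℂ) - ε * I) ∂m)
      (𝓝[>] 0) (𝓝 L)})
    (hdense2 : Dense {φ : Lp ℂ 2 m | ∃ L : ℂ, Tendsto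
      (fun ε : ℝ => ∫ μ, (starRingEnd ℂ) (v μ) * φ μ / ((μ : ℂ) - (lam2 : ℂ) - ε * I) ∂m)
      (𝓝[>] 0) (𝓝 L)})
    (hvne : ¬ v =ᵐ[m] 0) :
    -- the graphs of `X_{λ1}` and `X_{λ2}` are different subspaces:
    {p : Lp ℂ 2 m × ℂ | Tendsto
        (fun ε : ℝ => ∫ μ, (starRingEnd ℂ) (v μ) * p.1 μ / ((μ : ℂ) - (lam1 : ℂ) - ε * I) ∂m)
        (𝓝[>] 0) (𝓝 p.2)}
      ≠ {p : Lp ℂ 2 m × ℂ | Tendsto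
        (fun ε : ℝ => ∫ μ, (starRingEnd ℂ) (v μ) * p.1 μ / ((μ : ℂ) - (lam2 : ℂ) - ε * I) ∂m)
        (𝓝[>] 0) (𝓝 p.2)} := by
  intro hset
  apply hvne
  -- ================= Step A: v vanishes a.e. off {lam1, lam2} =================
  set φ0 : ℝ → ℂ := Xphi v lam1 lam2 with hφ0def
  have hφ0 : MemLp φ0 2 m := Xphi_memℒp hv lam1 lam2
  set φ : Lp ℂ 2 m := hφ0.toLp φ0 with hφdef
  have hφ : ⇑φ =ᵐ[m] φ0 := MemLp.coeFn_toLp _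
  have hcong : ∀ (c : ℝ) (ε : ℝ),
      ∫ μ, (starRingEnd ℂ) (v μ) * φ μ / ((μ : ℂ) - (c : ℂ) - ε * I) ∂m
        = ∫ μ, (starRingEnd ℂ) (v μ) * φ0 μ / ((μ : ℂ) - (c : ℂ) - ε * I) ∂m := by
    intro c ε
    refine integral_congr_ae ?_
    filter_upwards [hφ] with μ hμ
    rw [hμ]
  have key1 : Tendsto
      (fun ε : ℝ => ∫ μ, (starRingEnd ℂ) (v μ) * φ μ / ((μ : ℂ) - (lam1 : ℂ) - ε * I) ∂m)
      (𝓝[>] 0) (𝓝 (∫ μ, Xtarget v lam1 lam2 μ ∂m)) := by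
    have h := Xtendsto m v hv lam1 lam2
    refine h.congr fun ε => ?_
    rw [hcong lam1 ε]
  have key2 : Tendsto
      (fun ε : ℝ => ∫ μ, (starRingEnd ℂ) (v μ) * φ μ / ((μ : ℂ) - (lam2 : ℂ) - ε * I) ∂m)
      (𝓝[>] 0) (𝓝 (∫ μ, Xtarget v lam2 lam1 μ ∂m)) := by
    have h := Xtendsto m v hv lam2 lam1
    rw [Xphi_comm v lam2 lam1] at h
    refine h.congr fun ε => ?_
    rw [hcong lam2 ε]
  have hmem1 : (φ, ∫ μ, Xtarget v lam1 lam2 μ ∂m) ∈ {p : Lp ℂ 2 m × ℂ | Tendsto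
      (fun ε : ℝ => ∫ μ, (starRingEnd ℂ) (v μ) * p.1 μ / ((μ : ℂ) - (lam1 : ℂ) - ε * I) ∂m)
      (𝓝[>] 0) (𝓝 p.2)} := key1
  rw [hset] at hmem1
  have hL : (∫ μ, Xtarget v lam1 lam2 μ ∂m) = ∫ μ, Xtarget v lam2 lam1 μ ∂m :=
    tendsto_nhds_unique hmem1 key2
  have hsub : ∫ μ, (Xtarget v lam1 lam2 μ - Xtarget v lam2 lam1 μ) ∂m = 0 := by
    rw [integral_sub (Xtarget_integrable hv lam1 lam2) (Xtarget_integrable hv lam2 lam1), hL,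
      sub_self]
  have heq : (fun μ => Xtarget v lam1 lam2 μ - Xtarget v lam2 lam1 μ)
      = fun μ => ((lam1:ℂ) - (lam2:ℂ)) *
        ((starRingEnd ℂ) (v μ) * v μ * Xchi lam1 lam2 μ / ((1 + μ^2 : ℝ) : ℂ)) := by
    funext μ
    rw [Xtarget, Xtarget, Xchi_comm lam2 lam1]
    ring
  rw [heq, integral_const_mul] at hsub
  have hlamne : ((lam1:ℂ) - (lam2:ℂ)) ≠ 0 := sub_ne_zero.2 (by exact_mod_cast hne)
  have hI : ∫ μ, (starRingEnd ℂ) (v μ) * v μ * Xchi lam1 lam2 μ / ((1 + μ^2 : ℝ) : ℂ) ∂m = 0 :=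
    (mul_eq_zero.1 hsub).resolve_left hlamne
  -- realify
  set Xr : ℝ → ℝ := ({lam1, lam2}ᶜ : Set ℝ).indicator (fun _ => 1) with hXrdef
  have hXr : ∀ μ, Xchi lam1 lam2 μ = ((Xr μ : ℝ) : ℂ) := by
    intro μ
    by_cases h : μ = lam1 ∨ μ = lam2
    · rw [Xchi_eq_zero h, hXrdef, Set.indicator_of_notMem (by simp [Set.mem_insert_iff]; tauto)]
      simp
    · rw [Xchi_eq_one h, hXrdef, Set.indicator_of_mem (by simp [Set.mem_insert_iff]; tauto)]
      simp
  set r : ℝ → ℝ := fun μ => ‖v μ‖ * ‖v μ‖ * (Xr μ / (1 + μ^2)) with hrdef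
  have hrreal : (fun μ => (starRingEnd ℂ) (v μ) * v μ * Xchi lam1 lam2 μ / ((1 + μ^2 : ℝ) : ℂ))
      = fun μ => ((r μ : ℝ) : ℂ) := by
    funext μ
    have hz : (starRingEnd ℂ) (v μ) * v μ = ((‖v μ‖ * ‖v μ‖ : ℝ) : ℂ) := by
      rw [mul_comm, Complex.mul_conj]
      norm_cast
      rw [Complex.normSq_eq_norm_sq]
      ring
    rw [hXr μ, hrdef]
    push_cast
    rw [hz]
    push_cast
    ring
  rw [hrreal] at hI
  have h2cast : ((∫ μ, r μ ∂m : ℝ) : ℂ) = ∫ μ, ((r μ : ℝ) : ℂ) ∂m := integral_ofReal.symm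
  have hIr : ∫ μ, r μ ∂m = 0 := by exact_mod_cast h2cast.trans hI
  have hrint : Integrable r m := by
    refine Integrable.mono' (hv.norm.integrable_sq) ?_ (Filter.Eventually.of_forall fun μ => ?_)
    · have hXrm : Measurable Xr :=
        measurable_const.indicator ((MeasurableSet.insert (measurableSet_singleton lam2) lam1).compl)
      have hc : Measurable fun μ : ℝ => Xr μ / (1 + μ^2) :=
        hXrm.div (by fun_prop)
      exact ((hv.aestronglyMeasurable.norm.mul hv.aestronglyMeasurable.norm).mul
        hc.aestronglyMeasurable)
    · have h1 : Xr μ / (1 + μ^2) ≤ 1 := by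
        have hw : (0:ℝ) < 1 + μ^2 := by positivity
        have h2 : Xr μ ≤ 1 := by
          rw [hXrdef]; by_cases h : μ ∈ ({lam1, lam2}ᶜ : Set ℝ)
          · rw [Set.indicator_of_mem h]
          · rw [Set.indicator_of_notMem h]; norm_num
        have h3 : Xr μ / (1 + μ^2) ≤ Xr μ := by
          apply div_le_self ?_ (by nlinarith)
          rw [hXrdef]; by_cases h : μ ∈ ({lam1, lam2}ᶜ : Set ℝ)
          · rw [Set.indicator_of_mem h]; norm_num
          · rw [Set.indicator_of_notMem h]
        linarith
      have h0 : 0 ≤ Xr μ / (1 + μ^2) := by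
        apply div_nonneg ?_ (by positivity)
        rw [hXrdef]; by_cases h : μ ∈ ({lam1, lam2}ᶜ : Set ℝ)
        · rw [Set.indicator_of_mem h]; norm_num
        · rw [Set.indicator_of_notMem h]
      have : r μ ≤ ‖v μ‖^2 := by
        rw [hrdef]
        calc ‖v μ‖ * ‖v μ‖ * (Xr μ / (1 + μ^2)) ≤ ‖v μ‖ * ‖v μ‖ * 1 := by
              apply mul_le_mul_of_nonneg_left h1 (by positivity)
          _ = ‖v μ‖^2 := by ring
      have hr0 : 0 ≤ r μ := by rw [hrdef]; positivity
      rw [Real.norm_eq_abs, _root_.abs_of_nonneg hr0]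
      exact this
  have hrnonneg : 0 ≤ r := by
    intro μ
    rw [hrdef]
    have h0 : 0 ≤ Xr μ := by
      rw [hXrdef]; by_cases h : μ ∈ ({lam1, lam2}ᶜ : Set ℝ)
      · rw [Set.indicator_of_mem h]; norm_num
      · rw [Set.indicator_of_notMem h]
    positivity
  have hae : r =ᵐ[m] 0 := (integral_eq_zero_iff_of_nonneg hrnonneg hrint).1 hIr
  have hA : ∀ᵐ μ ∂m, μ = lam1 ∨ μ = lam2 ∨ v μ = 0 := by
    filter_upwards [hae] with μ hμ
    by_cases h : μ = lam1 ∨ μ = lam2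
    · exact h.imp id Or.inl
    · right; right
      have hXr1 : Xr μ = 1 := by
        rw [hXrdef, Set.indicator_of_mem (by simp [Set.mem_insert_iff]; tauto)]
      have hw : (0:ℝ) < 1 + μ^2 := by positivity
      rw [Pi.zero_apply, hrdef] at hμ
      simp only [hXr1] at hμ
      have h2 : ‖v μ‖ * ‖v μ‖ = 0 := by
        rcases mul_eq_zero.1 hμ with h' | h'
        · exact h'
        · exact absurd h' (by positivity)
      exact norm_eq_zero.1 (mul_self_eq_zero.1 h2)
  have hatom1 : m {lam1} = 0 ∨ v lam1 = 0 := Xatom m v lam1 lam2 hne hset.symm.subset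
  have hatom2 : m {lam2} = 0 ∨ v lam2 = 0 := Xatom m v lam2 lam1 (Ne.symm hne) hset.subset
  -- ================= conclusion =================
  have e1 : ∀ᵐ μ ∂m, μ = lam1 → v μ = 0 := by
    rcases hatom1 with h | h
    · have hne1 : ∀ᵐ μ ∂m, μ ≠ lam1 := by
        rw [ae_iff]; simpa using h
      filter_upwards [hne1] with μ h1 h2
      exact absurd h2 h1
    · exact Filter.Eventually.of_forall fun μ h2 => by rw [h2]; exact h
  have e2 : ∀ᵐ μ ∂m, μ = lam2 → v μ = 0 := by
    rcases hatom2 with h | h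
    · have hne2 : ∀ᵐ μ ∂m, μ ≠ lam2 := by
        rw [ae_iff]; simpa using h
      filter_upwards [hne2] with μ h1 h2
      exact absurd h2 h1
    · exact Filter.Eventually.of_forall fun μ h2 => by rw [h2]; exact h
  filter_upwards [hA, e1, e2] with μ h h1 h2
  show v μ = 0
  rcases h with h | h | h
  · exact h1 h
  · exact h2 h
  · exact h
end
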